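/- arXiv:2010.06730 — 4 statements merged into one kernel-verified Lean document; each statement's English description precedes it below -/
import Mathlib

section
/- Let K be a compact convex subset of a locally convex Hausdorff topological vector space and f : K → ℝ an upper semicontinuous convex function. Then f attains its maximum at an extreme point of K. -/
open Set Filter Topology

/-- Superlevel sets of an upper semicontinuous function on a compact set are compact. -/
lemma aux_superlevel_compact {E : Type*} [TopologicalSpace E] {K : Set E}
    (hKcpt : IsCompact K) {f : E → ℝ} (hf : UpperSemicontinuousOn f K) (c : ℝ) :
    IsCompact {x ∈ K | c ≤ f x} := by
  rw [isCompact_iff_ultrafilter_le_nhds]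
  intro G hG
  have hGK : (G : Filter E) ≤ 𝓟 K := hG.trans (principal_mono.2 (sep_subset _ _))
  obtain ⟨x, hxK, hx⟩ := hKcpt.ultrafilter_le_nhds G hGK
  refine ⟨x, ⟨hxK, ?_⟩, hx⟩
  by_contra hlt
  push_neg at hlt
  have h1 : {z | f z < c} ∈ 𝓝[K] x := hf x hxK c hlt
  have h2 : {z | f z < c} ∈ G := by
    have : (G : Filter E) ≤ 𝓝[K] x := le_inf hx hGK
    exact this h1
  have h3 : {x ∈ K | c ≤ f x} ∈ G := hG (mem_principal_self _)
  obtain ⟨z, hz1, hz2⟩ := G.nonempty_of_mem (inter_mem h2 h3)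
  exact absurd hz2.2 (not_le.2 hz1)

/-- An upper semicontinuous function on a nonempty compact set attains its maximum. -/
lemma aux_exists_max {E : Type*} [TopologicalSpace E] {K : Set E}
    (hKcpt : IsCompact K) (hKne : K.Nonempty) {f : E → ℝ}
    (hf : UpperSemicontinuousOn f K) : ∃ x ∈ K, ∀ y ∈ K, f y ≤ f x := by
  set S : K → Set E := fun y => {x ∈ K | f y ≤ f x} with hS
  have hdir : Directed (· ≥ ·) fun y : K => 𝓟 (S y) := by
    intro y z
    rcases le_total (f y) (f z) with h | h
    · exact ⟨z, principal_mono.2 fun x hx => ⟨hx.1, h.trans hx.2⟩, le_rfl⟩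
    · exact ⟨y, le_rfl, principal_mono.2 fun x hx => ⟨hx.1, h.trans hx.2⟩⟩
  haveI : Nonempty K := hKne.to_subtype
  haveI hne : ∀ y : K, (𝓟 (S y)).NeBot := fun y =>
    principal_neBot_iff.2 ⟨y, y.2, le_rfl⟩
  haveI : (⨅ y : K, 𝓟 (S y)).NeBot := iInf_neBot_of_directed' hdir hne
  set F := ⨅ y : K, 𝓟 (S y)
  have hFK : F ≤ 𝓟 K := (iInf_le _ (Classical.arbitrary K)).trans
    (principal_mono.2 (sep_subset _ _))
  obtain ⟨x, hxK, hx⟩ := hKcpt hFK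
  refine ⟨x, hxK, fun y hyK => ?_⟩
  by_contra hlt
  push_neg at hlt
  have h1 : {z | f z < f y} ∈ 𝓝[K] x := hf x hxK _ hlt
  have h2 : {z | f z < f y} ∈ 𝓝 x ⊓ F := by
    have : 𝓝 x ⊓ F ≤ 𝓝[K] x := inf_le_inf_left _ hFK
    exact this h1
  have h3 : S ⟨y, hyK⟩ ∈ 𝓝 x ⊓ F := by
    have hle : 𝓝 x ⊓ F ≤ 𝓟 (S ⟨y, hyK⟩) := inf_le_right.trans (iInf_le _ (⟨y, hyK⟩ : K))
    exact hle (mem_principal_self _)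
  have : {z | f z < f y} ∩ S ⟨y, hyK⟩ ∈ 𝓝 x ⊓ F := inter_mem h2 h3
  obtain ⟨z, hz1, hz2⟩ := hx.nonempty_of_mem this
  exact absurd hz2.2 (not_le.2 hz1)

/-- Bauer Maximum Principle: an upper semicontinuous convex function on a nonempty
compact convex subset of a locally convex Hausdorff topological vector space attains
its maximum at an extreme point. -/
theorem stmt8 {E : Type*} [AddCommGroup E] [Module ℝ E] [TopologicalSpace E]
    [IsTopologicalAddGroup E] [ContinuousSMul ℝ E] [LocallyConvexSpace ℝ E] [T2Space E]
    {K : Set E} (hKcpt : IsCompact K) (hKconv : Convex ℝ K) (hKne : K.Nonempty)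
    {f : E → ℝ} (hf : UpperSemicontinuousOn f K) (hfconv : ConvexOn ℝ K f) :
    ∃ x ∈ K.extremePoints ℝ, ∀ y ∈ K, f y ≤ f x := by
  obtain ⟨x₀, hx₀K, hx₀⟩ := aux_exists_max hKcpt hKne hf
  set S : Set E := {x ∈ K | f x₀ ≤ f x} with hSdef
  have hScpt : IsCompact S := aux_superlevel_compact hKcpt hf _
  have hSne : S.Nonempty := ⟨x₀, hx₀K, le_rfl⟩
  have hSext : IsExtreme ℝ K S := by
    refine ⟨sep_subset _ _, fun x₁ hx₁ x₂ hx₂ x hxS hseg => ?_⟩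
    obtain ⟨a, b, ha, hb, hab, hxeq⟩ := hseg
    have hfx : f x = f x₀ := le_antisymm (hx₀ x hxS.1) hxS.2
    have hconv : f x ≤ a * f x₁ + b * f x₂ := by
      have := hfconv.2 hx₁ hx₂ ha.le hb.le hab
      rwa [hxeq] at this
    have h1 : f x₁ = f x₀ := by
      by_contra h
      have h1' : f x₁ < f x₀ := lt_of_le_of_ne (hx₀ x₁ hx₁) h
      have : a * f x₁ + b * f x₂ < a * f x₀ + b * f x₀ := by
        have hb2 : b * f x₂ ≤ b * f x₀ := by
          exact mul_le_mul_of_nonneg_left (hx₀ x₂ hx₂) hb.le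
        have ha2 : a * f x₁ < a * f x₀ := by
          exact mul_lt_mul_of_pos_left h1' ha
        linarith
      rw [← add_mul, hab, one_mul] at this
      exact absurd (hfx ▸ hconv) (not_le.2 this)
    have h2 : f x₂ = f x₀ := by
      by_contra h
      have h2' : f x₂ < f x₀ := lt_of_le_of_ne (hx₀ x₂ hx₂) h
      have : a * f x₁ + b * f x₂ < a * f x₀ + b * f x₀ := by
        have ha2 : a * f x₁ ≤ a * f x₀ := mul_le_mul_of_nonneg_left (hx₀ x₁ hx₁) ha.le
        have hb2 : b * f x₂ < b * f x₀ := mul_lt_mul_of_pos_left h2' hb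
        linarith
      rw [← add_mul, hab, one_mul] at this
      exact absurd (hfx ▸ hconv) (not_le.2 this)
    exact ⟨hx₁, h1.ge⟩
  obtain ⟨x, hx⟩ := hScpt.extremePoints_nonempty hSne
  refine ⟨x, hSext.extremePoints_subset_extremePoints hx, fun y hyK => ?_⟩
  exact (hx₀ y hyK).trans (extremePoints_subset hx).2
end

section
/- Let X be a Hausdorff topological space, B a closed subset of X which is a normal topological space, u : [0,∞) → B continuous, and K ⊆ X a compact set that attracts u (for every open neighborhood O of K there is T > 0 with u(t) ∈ O for all t ≥ T). Given a generalized limit LIM, there exists a Borel probability measure μ on X carried by K ∩ B such that LIM_{T→∞} (1/T)∫₀^T φ(u(t)) dt = ∫_X φ dμ for every continuous bounded φ : B → ℝ. Moreover, for a given φ₀ ∈ C_b(B), the generalized limit and μ can be chosen so that ∫ φ₀ dμ = limsup_{T→∞} (1/T)∫₀^T φ₀(u(t)) dt. -/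
open MeasureTheory Filter

/-- A *generalized limit*: a positive linear functional on the space of bounded
real-valued functions on `[0,∞)` extending the classical limit at infinity. -/
structure GeneralizedLimit where
  lim : (ℝ → ℝ) → ℝ
  map_add : ∀ f g : ℝ → ℝ, (∃ M, ∀ t ≥ (0:ℝ), |f t| ≤ M) → (∃ M, ∀ t ≥ (0:ℝ), |g t| ≤ M) →
    lim (f + g) = lim f + lim g
  map_smul : ∀ (c : ℝ) (f : ℝ → ℝ), (∃ M, ∀ t ≥ (0:ℝ), |f t| ≤ M) → lim (c • f) = c * lim f
  extends_limit : ∀ (f : ℝ → ℝ) (l : ℝ), (∃ M, ∀ t ≥ (0:ℝ), |f t| ≤ M) →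
    Tendsto f atTop (nhds l) → lim f = l
  pos : ∀ f : ℝ → ℝ, (∃ M, ∀ t ≥ (0:ℝ), |f t| ≤ M) → (∀ t ≥ (0:ℝ), 0 ≤ f t) → 0 ≤ lim f

set_option linter.unusedSectionVars false
set_option linter.unusedVariables false
set_option maxHeartbeats 2000000

open MeasureTheory TopologicalSpace Set ENNReal
set_option maxHeartbeats 2000000
set_option linter.unusedSectionVars false
set_option linter.unusedVariables false

noncomputable section RMK

variable {Y : Type*} [TopologicalSpace Y] [CompactSpace Y] [T2Space Y]

/-- test functions for the Riesz content of a compact set -/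
def rkT (C : Set Y) : Set C(Y, ℝ) := {f | (∀ y, 0 ≤ f y) ∧ ∀ y ∈ C, 1 ≤ f y}

variable (Λ : C(Y, ℝ) → ℝ)

def rkc (C : Set Y) : ℝ := sInf (Λ '' rkT C)

variable (hadd : ∀ f g, Λ (f + g) = Λ f + Λ g)
  (hsmul : ∀ (c : ℝ) (f), Λ (c • f) = c * Λ f)
  (hpos : ∀ f, (∀ y, (0:ℝ) ≤ f y) → 0 ≤ Λ f)

section basic
include hadd hpos

theorem rk_mono {f g : C(Y,ℝ)} (h : ∀ y, f y ≤ g y) : Λ f ≤ Λ g := by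
  have h1 : Λ g = Λ f + Λ (g - f) := by
    rw [← hadd]; congr 1; abel
  have h2 : 0 ≤ Λ (g - f) := hpos _ fun y => by simpa using h y
  linarith

theorem rkT_nonempty (C : Set Y) : ((Λ '' rkT C)).Nonempty :=
  ⟨Λ 1, 1, ⟨fun _ => zero_le_one, fun _ _ => le_refl _⟩, rfl⟩

theorem rkT_bddBelow (C : Set Y) : BddBelow (Λ '' rkT C) := by
  refine ⟨0, fun x hx => ?_⟩
  rcases hx with ⟨f, hf, rfl⟩
  exact hpos f hf.1

theorem rkc_nonneg (C : Set Y) : 0 ≤ rkc Λ C :=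
  le_csInf (rkT_nonempty Λ hadd hpos C) (by rintro x ⟨f, hf, rfl⟩; exact hpos f hf.1)

theorem rkc_le {C : Set Y} {f : C(Y,ℝ)} (hf : f ∈ rkT C) : rkc Λ C ≤ Λ f :=
  csInf_le (rkT_bddBelow Λ hadd hpos C) ⟨f, hf, rfl⟩

theorem le_rkc {C : Set Y} {c : ℝ} (h : ∀ f ∈ rkT C, c ≤ Λ f) : c ≤ rkc Λ C :=
  le_csInf (rkT_nonempty Λ hadd hpos C) (by rintro x ⟨f, hf, rfl⟩; exact h f hf)

theorem exists_rkc_lt {C : Set Y} {ε : ℝ} (hε : 0 < ε) :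
    ∃ f ∈ rkT C, Λ f < rkc Λ C + ε := by
  obtain ⟨x, ⟨f, hf, rfl⟩, hlt⟩ := exists_lt_of_csInf_lt (rkT_nonempty Λ hadd hpos C)
    (lt_add_of_pos_right (rkc Λ C) hε)
  exact ⟨f, hf, hlt⟩

theorem rkc_mono {C₁ C₂ : Set Y} (h : C₁ ⊆ C₂) : rkc Λ C₁ ≤ rkc Λ C₂ :=
  le_rkc Λ hadd hpos fun f hf => rkc_le Λ hadd hpos ⟨hf.1, fun y hy => hf.2 y (h hy)⟩

theorem rkc_sup_le (C₁ C₂ : Set Y) : rkc Λ (C₁ ∪ C₂) ≤ rkc Λ C₁ + rkc Λ C₂ := by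
  refine le_of_forall_pos_le_add fun ε hε => ?_
  obtain ⟨f₁, hf₁, h₁⟩ := exists_rkc_lt Λ hadd hpos (C := C₁) (half_pos hε)
  obtain ⟨f₂, hf₂, h₂⟩ := exists_rkc_lt Λ hadd hpos (C := C₂) (half_pos hε)
  have : rkc Λ (C₁ ∪ C₂) ≤ Λ (f₁ + f₂) := by
    refine rkc_le Λ hadd hpos ⟨fun y => add_nonneg (hf₁.1 y) (hf₂.1 y), ?_⟩
    rintro y (hy | hy)
    · have := hf₁.2 y hy; have := hf₂.1 y; simp only [ContinuousMap.add_apply]; linarith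
    · have := hf₂.2 y hy; have := hf₁.1 y; simp only [ContinuousMap.add_apply]; linarith
  rw [hadd] at this; linarith

end basic

section content
include hadd hsmul hpos

theorem rkc_sup_disjoint {C₁ C₂ : Set Y} (hC₁ : IsClosed C₁) (hC₂ : IsClosed C₂)
    (hd : Disjoint C₁ C₂) : rkc Λ (C₁ ∪ C₂) = rkc Λ C₁ + rkc Λ C₂ := by
  refine le_antisymm (rkc_sup_le Λ hadd hpos C₁ C₂) ?_
  obtain ⟨g, hg0, hg1, hg01⟩ := exists_continuous_zero_one_of_isClosed hC₂ hC₁ hd.symm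
  refine le_rkc Λ hadd hpos fun f hf => ?_
  have key : Λ (f * g) + Λ (f * (1 - g)) = Λ f := by
    rw [← hadd]; congr 1; ext y; simp [ContinuousMap.mul_apply]; ring
  have h₁ : rkc Λ C₁ ≤ Λ (f * g) := by
    refine rkc_le Λ hadd hpos ⟨fun y => mul_nonneg (hf.1 y) (hg01 y).1, fun y hy => ?_⟩
    have := hf.2 y (Or.inl hy)
    have hgy : g y = 1 := hg1 hy
    simp only [ContinuousMap.mul_apply, hgy, mul_one]; exact this
  have h₂ : rkc Λ C₂ ≤ Λ (f * (1 - g)) := by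
    refine rkc_le Λ hadd hpos ⟨fun y => mul_nonneg (hf.1 y) (by simpa using (hg01 y).2), fun y hy => ?_⟩
    have := hf.2 y (Or.inr hy)
    have hgy : g y = 0 := hg0 hy
    simp only [ContinuousMap.mul_apply, ContinuousMap.sub_apply, ContinuousMap.one_apply, hgy]
    simpa using this
  linarith

/-- The Riesz content associated to a positive linear functional. -/
def rieszCont : Content Y where
  toFun := fun C => Real.toNNReal (rkc Λ C)
  mono' := fun C₁ C₂ h => Real.toNNReal_mono (rkc_mono Λ hadd hpos h)
  sup_disjoint' := fun C₁ C₂ hd h₁ h₂ => by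
    simp only [Compacts.coe_sup]
    rw [← Real.toNNReal_add (rkc_nonneg Λ hadd hpos _) (rkc_nonneg Λ hadd hpos _),
      rkc_sup_disjoint Λ hadd hsmul hpos h₁ h₂ hd]
  sup_le' := fun C₁ C₂ => by
    rw [← Real.toNNReal_add (rkc_nonneg Λ hadd hpos _) (rkc_nonneg Λ hadd hpos _)]
    exact Real.toNNReal_mono (rkc_sup_le Λ hadd hpos _ _)

end content

section measure
variable [MeasurableSpace Y] [BorelSpace Y] (hone : Λ (1 : C(Y,ℝ)) = 1)

/-- The Riesz measure. -/
def rieszMeas : Measure Y := (rieszCont Λ hadd hsmul hpos).measure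

include hadd hsmul hpos

theorem rieszCont_apply (C : Compacts Y) :
    (rieszCont Λ hadd hsmul hpos : Compacts Y → ℝ≥0∞) C = ENNReal.ofReal (rkc Λ (C : Set Y)) :=
  rfl

theorem rieszMeas_open {U : Set Y} (hU : IsOpen U) :
    rieszMeas Λ hadd hsmul hpos U =
      (rieszCont Λ hadd hsmul hpos).innerContent ⟨U, hU⟩ := by
  rw [rieszMeas, Content.measure_apply _ hU.measurableSet,
     (rieszCont Λ hadd hsmul hpos).outerMeasure_of_isOpen U hU]

include hone

theorem rieszMeas_univ : rieszMeas Λ hadd hsmul hpos (univ : Set Y) = 1 := by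
  rw [rieszMeas_open Λ hadd hsmul hpos isOpen_univ]
  have huniv : rkc Λ (univ : Set Y) = 1 := by
    refine le_antisymm ?_ ?_
    · have := rkc_le Λ hadd hpos (C := univ) (f := 1)
        ⟨fun _ => zero_le_one, fun _ _ => le_refl _⟩
      rwa [hone] at this
    · rw [← hone]
      exact le_rkc Λ hadd hpos fun f hf => rk_mono Λ hadd hpos fun y => hf.2 y (mem_univ y)
  refine le_antisymm ?_ ?_
  · refine iSup_le fun K => iSup_le fun _ => ?_
    rw [rieszCont_apply]
    refine le_trans (ENNReal.ofReal_le_ofReal (rkc_mono Λ hadd hpos (subset_univ _))) ?_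
    rw [huniv]; simp
  · have := (rieszCont Λ hadd hsmul hpos).le_innerContent ⟨univ, isCompact_univ⟩
      ⟨univ, isOpen_univ⟩ (subset_refl _)
    rw [rieszCont_apply] at this
    simp only [Compacts.coe_mk, huniv] at this
    simpa using this

theorem rieszMeas_prob : IsProbabilityMeasure (rieszMeas Λ hadd hsmul hpos) :=
  ⟨rieszMeas_univ Λ hadd hsmul hpos hone⟩

theorem rieszMeas_ne_top (s : Set Y) : rieszMeas Λ hadd hsmul hpos s ≠ ∞ := by
  have := measure_mono (μ := rieszMeas Λ hadd hsmul hpos) (subset_univ s)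
  rw [rieszMeas_univ Λ hadd hsmul hpos hone] at this
  exact ne_top_of_le_ne_top one_ne_top this

theorem lam_le_measure_open {h : C(Y,ℝ)} (h0 : ∀ y, 0 ≤ h y) (h1 : ∀ y, h y ≤ 1)
    {U : Set Y} (hU : IsOpen U) (hsupp : tsupport h ⊆ U) :
    Λ h ≤ (rieszMeas Λ hadd hsmul hpos U).toReal := by
  have hC : IsCompact (tsupport h) := (isClosed_tsupport _).isCompact
  have step1 : Λ h ≤ rkc Λ (tsupport h) := by
    refine le_rkc Λ hadd hpos fun f hf => rk_mono Λ hadd hpos fun y => ?_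
    by_cases hy : y ∈ tsupport h
    · exact le_trans (h1 y) (hf.2 y hy)
    · rw [image_eq_zero_of_notMem_tsupport hy]; exact hf.1 y
  have step2 : ENNReal.ofReal (rkc Λ (tsupport h)) ≤ rieszMeas Λ hadd hsmul hpos U := by
    rw [rieszMeas_open Λ hadd hsmul hpos hU]
    have := (rieszCont Λ hadd hsmul hpos).le_innerContent ⟨_, hC⟩ ⟨U, hU⟩ hsupp
    rw [rieszCont_apply] at this
    simpa only [Compacts.coe_mk] using this
  calc Λ h ≤ rkc Λ (tsupport h) := step1
    _ = (ENNReal.ofReal (rkc Λ (tsupport h))).toReal :=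
        (ENNReal.toReal_ofReal (rkc_nonneg Λ hadd hpos _)).symm
    _ ≤ _ := ENNReal.toReal_mono (rieszMeas_ne_top Λ hadd hsmul hpos hone U) step2

end measure

section main
variable [MeasurableSpace Y] [BorelSpace Y]

include hsmul in
theorem lam_zero : Λ (0 : C(Y,ℝ)) = 0 := by
  have := hsmul 0 0; simpa using this

include hadd hsmul in
theorem lam_sum {ι : Type*} (s : Finset ι) (g : ι → C(Y,ℝ)) :
    Λ (∑ i ∈ s, g i) = ∑ i ∈ s, Λ (g i) := by
  classical
  induction s using Finset.induction with
  | empty => simpa using lam_zero Λ hsmul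
  | insert _ _ h ih => rw [Finset.sum_insert h, hadd, ih, Finset.sum_insert h]

include hadd hsmul hpos

theorem lam_le_integral (hone : Λ (1 : C(Y,ℝ)) = 1) (f : C(Y,ℝ)) :
    Λ f ≤ ∫ y, f y ∂(rieszMeas Λ hadd hsmul hpos) := by
  classical
  set μ := rieszMeas Λ hadd hsmul hpos with hμdef
  haveI : IsProbabilityMeasure μ := rieszMeas_prob Λ hadd hsmul hpos hone
  have hfint : Integrable (⇑f) μ := (BoundedContinuousFunction.mkOfCompact f).integrable μ
  have hμfin : ∀ s : Set Y, μ s ≠ ⊤ := rieszMeas_ne_top Λ hadd hsmul hpos hone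
  have key : ∀ ε : ℝ, 0 < ε → ε ≤ 1 → Λ f ≤ (∫ y, f y ∂μ) + ε * (2*‖f‖ + 8) := by
    intro ε hε hε1
    set c : ℝ := ‖f‖ + ε with hc
    have hc0 : 0 < c := by positivity
    have hfx : ∀ x, |f x| < c := fun x => lt_of_le_of_lt (f.norm_coe_le_norm x) (by simp [hc, hε])
    set n : ℕ := ⌈2*c/ε⌉₊ with hn
    have hn0 : 0 < n := by rw [hn]; exact Nat.ceil_pos.mpr (by positivity)
    have hnR : (0:ℝ) < n := by exact_mod_cast hn0
    have hnn : (n:ℝ) ≤ 2*c/ε + 1 := (Nat.ceil_lt_add_one (by positivity)).le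
    have hcn : 2*c ≤ n * ε := by
      have h1 := Nat.le_ceil (2*c/ε)
      calc 2*c = (2*c/ε)*ε := by field_simp
        _ ≤ n * ε := mul_le_mul_of_nonneg_right h1 hε.le
    set yv : Fin n → ℝ := fun i => -c + ((i:ℕ)+1)*ε with hyv
    set E : Fin n → Set Y := fun i => f ⁻¹' Ioc (yv i - ε) (yv i) with hE
    have hEmeas : ∀ i, MeasurableSet (E i) := fun i =>
      f.continuous.measurable measurableSet_Ioc
    have hEdisj : Pairwise (Function.onFun Disjoint E) := by
      have key2 : ∀ (i j : Fin n), i < j → Disjoint (E i) (E j) := by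
        intro i j hij
        rw [Set.disjoint_left]
        rintro x ⟨h1l, h1r⟩ ⟨h2l, h2r⟩
        have hij' : ((i:ℕ):ℝ)+1 ≤ ((j:ℕ):ℝ) := by exact_mod_cast hij
        have : ((i:ℕ):ℝ)*ε + ε ≤ ((j:ℕ):ℝ)*ε := by nlinarith
        simp only [hyv] at h1r h2l
        have h2l' : -c + ((j:ℕ):ℝ)*ε < f x := by push_cast at h2l ⊢; linarith
        push_cast at h1r
        linarith
      intro i j hij
      rcases lt_or_gt_of_ne hij with h | h
      · exact key2 i j h
      · exact (key2 j i h).symm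
    have hcover : (⋃ i, E i) = univ := by
      refine eq_univ_of_forall fun x => ?_
      have haL : -c < f x := by have := hfx x; rw [abs_lt] at this; exact this.1
      have haR : f x < c := by have := hfx x; rw [abs_lt] at this; exact this.2
      set k : ℕ := ⌈(f x + c)/ε⌉₊ with hk
      have hk1 : 1 ≤ k := Nat.one_le_iff_ne_zero.mpr (by
        rw [hk]; exact (Nat.ceil_pos.mpr (div_pos (by linarith) hε)).ne')
      have hkn : k ≤ n := by
        rw [hk, hn]; exact Nat.ceil_le_ceil (by rw [div_le_div_iff_of_pos_right hε]; linarith)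
      set i : Fin n := ⟨k-1, by omega⟩ with hidef
      have hival : ((i:ℕ):ℝ) = ((k-1:ℕ):ℝ) := rfl
      refine mem_iUnion.mpr ⟨i, ?_⟩
      simp only [hE, mem_preimage, mem_Ioc, hyv]
      have hcast : ((k-1 : ℕ):ℝ) = (k:ℝ) - 1 := by
        push_cast [Nat.cast_sub hk1]; ring
      constructor
      · have := Nat.lt_ceil.mp (show k-1 < k by omega)
        rw [← hk] at *
        have : ((k-1:ℕ):ℝ) * ε < f x + c := by
          have h2 : ((k-1:ℕ):ℝ) < (f x + c)/ε := by exact_mod_cast Nat.lt_ceil.mp (show k-1 < ⌈(f x + c)/ε⌉₊ by omega)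
          calc ((k-1:ℕ):ℝ) * ε < ((f x + c)/ε) * ε := mul_lt_mul_of_pos_right h2 hε
            _ = f x + c := by field_simp
        rw [hival, hcast] at *
        linarith
      · have h2 : (f x + c)/ε ≤ k := Nat.le_ceil _
        have : f x + c ≤ (k:ℝ) * ε := by
          calc f x + c = ((f x + c)/ε) * ε := by field_simp
            _ ≤ (k:ℝ)*ε := mul_le_mul_of_nonneg_right h2 hε.le
        rw [hival, hcast]
        linarith
    -- choose open sets
    have hWex : ∀ i : Fin n, ∃ W, E i ⊆ W ∧ IsOpen W ∧ μ W < μ (E i) + ENNReal.ofReal (ε/n) := by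
      intro i
      haveI : μ.OuterRegular := Content.outerRegular (rieszCont Λ hadd hsmul hpos)
      obtain ⟨W, hW1, hW2, hW3⟩ := Set.exists_isOpen_lt_add (μ := μ) (ε := ENNReal.ofReal (ε/n)) (E i) (hμfin _)
        (by simp only [ne_eq, ENNReal.ofReal_eq_zero, not_le]; exact div_pos hε hnR)
      exact ⟨W, hW1, hW2, hW3⟩
    choose W hWE hWopen hWμ using hWex
    set V : Fin n → Set Y := fun i => W i ∩ f ⁻¹' Iio (yv i + ε) with hV
    have hVopen : ∀ i, IsOpen (V i) := fun i =>
      (hWopen i).inter (isOpen_Iio.preimage f.continuous)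
    have hVE : ∀ i, E i ⊆ V i := fun i x hx =>
      ⟨hWE i hx, by simp only [mem_preimage, mem_Iio]; linarith [hx.2, hε]⟩
    have hVμ : ∀ i, μ (V i) ≤ μ (E i) + ENNReal.ofReal (ε/n) := fun i =>
      le_trans (measure_mono inter_subset_left) (hWμ i).le
    have hVf : ∀ i, ∀ x ∈ V i, f x < yv i + ε := fun i x hx => hx.2
    -- partition of unity
    obtain ⟨p, hp⟩ := PartitionOfUnity.exists_isSubordinate isClosed_univ V hVopen
      (by rw [← hcover]; exact iUnion_mono hVE)
    have hsum1 : ∀ x, ∑ i : Fin n, (p i) x = 1 := fun x => by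
      rw [← finsum_eq_sum_of_fintype]; exact p.sum_eq_one (mem_univ x)
    have hle1 : ∀ (i : Fin n) (x : Y), (p i) x ≤ 1 := by
      intro i x
      have h1 : (p i) x ≤ ∑ j : Fin n, (p j) x :=
        Finset.single_le_sum (fun j _ => p.nonneg j x) (Finset.mem_univ i)
      rw [hsum1 x] at h1; exact h1
    have hfsum : (∑ i : Fin n, (p i : C(Y,ℝ)) * f) = f := by
      ext x
      rw [ContinuousMap.sum_apply]
      simp only [ContinuousMap.mul_apply]
      rw [← Finset.sum_mul, hsum1, one_mul]
    have S1 : Λ f = ∑ i : Fin n, Λ ((p i : C(Y,ℝ)) * f) := by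
      rw [← lam_sum Λ hadd hsmul, hfsum]
    have S2 : ∀ i : Fin n, Λ ((p i : C(Y,ℝ)) * f) ≤ (yv i + ε) * Λ (p i) := by
      intro i
      have hpt : ∀ x, ((p i : C(Y,ℝ)) * f) x ≤ ((yv i + ε) • (p i : C(Y,ℝ))) x := by
        intro x
        simp only [ContinuousMap.mul_apply, ContinuousMap.smul_apply, smul_eq_mul]
        by_cases hx : (p i) x = 0
        · simp [hx]
        · have hxs : x ∈ V i := hp i (subset_closure (Function.mem_support.mpr hx))
          have h1 := hVf i x hxs
          have h0 := p.nonneg i x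
          nlinarith
      have := rk_mono Λ hadd hpos hpt
      rwa [hsmul] at this
    have S3 : ∀ i : Fin n, 0 ≤ Λ (p i) := fun i => hpos _ (p.nonneg i)
    have S4 : ∀ i : Fin n, Λ (p i) ≤ (μ (V i)).toReal := fun i =>
      lam_le_measure_open Λ hadd hsmul hpos hone (p.nonneg i) (hle1 i) (hVopen i) (hp i)
    have S5 : ∑ i : Fin n, Λ (p i) = 1 := by
      rw [← lam_sum Λ hadd hsmul, ← hone]
      congr 1
      ext x
      rw [ContinuousMap.sum_apply]
      simpa using hsum1 x
    have S6 : ∀ i : Fin n, (μ (V i)).toReal ≤ (μ (E i)).toReal + ε/n := by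
      intro i
      have h2 : (μ (V i)).toReal ≤ (μ (E i) + ENNReal.ofReal (ε/n)).toReal :=
        ENNReal.toReal_mono (ENNReal.add_ne_top.mpr ⟨hμfin _, ENNReal.ofReal_ne_top⟩) (hVμ i)
      rwa [ENNReal.toReal_add (hμfin _) ENNReal.ofReal_ne_top,
        ENNReal.toReal_ofReal (by positivity)] at h2
    have S7 : ∑ i : Fin n, (μ (E i)).toReal = 1 := by
      have h1 : ∑ i : Fin n, μ (E i) = 1 := by
        rw [← tsum_fintype (L := SummationFilter.unconditional _), ← measure_iUnion hEdisj hEmeas, hcover, measure_univ]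
      calc ∑ i : Fin n, (μ (E i)).toReal = (∑ i : Fin n, μ (E i)).toReal :=
            (ENNReal.toReal_sum (fun i _ => hμfin _)).symm
        _ = 1 := by rw [h1]; simp
    have S8 : ∫ y, f y ∂μ = ∑ i : Fin n, ∫ y in E i, f y ∂μ := by
      have h1 : ∫ y, f y ∂μ = ∫ y in ⋃ i, E i, f y ∂μ := by
        rw [hcover, setIntegral_univ]
      rw [h1, integral_iUnion hEmeas hEdisj hfint.integrableOn, tsum_fintype]
    have S9 : ∀ i : Fin n, (yv i - ε) * (μ (E i)).toReal ≤ ∫ y in E i, f y ∂μ := fun i => by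
      have := setIntegral_ge_of_const_le (hEmeas i) (hμfin _) (fun x hx => le_of_lt hx.1)
        hfint.integrableOn
      rw [smul_eq_mul, mul_comm] at this; exact this
    have coeff_nonneg : ∀ i : Fin n, 0 ≤ yv i + ε + c := by
      intro i; simp only [hyv]
      have h0 : (0:ℝ) ≤ ((i:ℕ):ℝ) := Nat.cast_nonneg _
      nlinarith
    have coeff_le : ∀ i : Fin n, yv i + ε + c ≤ ((n:ℝ)+1)*ε := by
      intro i; simp only [hyv]
      have h0 : ((i:ℕ):ℝ) + 1 ≤ (n:ℝ) := by exact_mod_cast i.2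
      nlinarith
    have main1 : Λ f ≤ ∑ i : Fin n, (yv i + ε) * Λ (p i) := by
      rw [S1]; exact Finset.sum_le_sum fun i _ => S2 i
    have main2 : ∑ i : Fin n, (yv i + ε + c) * Λ (p i)
        = (∑ i : Fin n, (yv i + ε) * Λ (p i)) + c := by
      have h1 : ∑ i : Fin n, (yv i + ε + c) * Λ (p i)
          = ∑ i : Fin n, ((yv i + ε) * Λ (p i) + c * Λ (p i)) :=
        Finset.sum_congr rfl fun i _ => by ring
      rw [h1, Finset.sum_add_distrib, ← Finset.mul_sum, S5, mul_one]
    have main3 : ∑ i : Fin n, (yv i + ε + c) * Λ (p i)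
        ≤ ∑ i : Fin n, (yv i + ε + c) * ((μ (E i)).toReal + ε/n) :=
      Finset.sum_le_sum fun i _ => mul_le_mul_of_nonneg_left
        (le_trans (S4 i) (S6 i)) (coeff_nonneg i)
    have main4 : ∑ i : Fin n, (yv i + ε + c) * ((μ (E i)).toReal + ε/n)
        = ∑ i : Fin n, (yv i + ε + c) * (μ (E i)).toReal
          + ∑ i : Fin n, (yv i + ε + c) * (ε/n) := by
      rw [← Finset.sum_add_distrib]; exact Finset.sum_congr rfl fun i _ => by ring
    have main5 : ∑ i : Fin n, (yv i + ε + c) * (ε/n) ≤ 2*c*ε + 2*ε^2 := by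
      have h1 : ∑ i : Fin n, (yv i + ε + c) * (ε/n)
          ≤ ∑ _i : Fin n, ((n:ℝ)+1)*ε * (ε/n) :=
        Finset.sum_le_sum fun i _ => mul_le_mul_of_nonneg_right (coeff_le i)
          (by positivity)
      have h2 : ∑ _i : Fin n, ((n:ℝ)+1)*ε * (ε/n) = ((n:ℝ)+1)*ε^2 := by
        rw [Finset.sum_const, Finset.card_univ, Fintype.card_fin, nsmul_eq_mul]
        field_simp
      have h3 : ((n:ℝ)+1)*ε^2 ≤ (2*c/ε + 2)*ε^2 := by nlinarith
      have h4 : (2*c/ε + 2)*ε^2 = 2*c*ε + 2*ε^2 := by field_simp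
      linarith
    have main6 : ∑ i : Fin n, (yv i + ε + c) * (μ (E i)).toReal
        = ∑ i : Fin n, (yv i + ε) * (μ (E i)).toReal + c := by
      have h1 : ∑ i : Fin n, (yv i + ε + c) * (μ (E i)).toReal
          = ∑ i : Fin n, ((yv i + ε) * (μ (E i)).toReal + c * (μ (E i)).toReal) :=
        Finset.sum_congr rfl fun i _ => by ring
      rw [h1, Finset.sum_add_distrib, ← Finset.mul_sum, S7, mul_one]
    have main7 : ∑ i : Fin n, (yv i + ε) * (μ (E i)).toReal
        ≤ (∑ i : Fin n, ∫ y in E i, f y ∂μ) + 2*ε := by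
      have h1 : ∀ i : Fin n, (yv i + ε) * (μ (E i)).toReal
          ≤ (∫ y in E i, f y ∂μ) + 2*ε*(μ (E i)).toReal := by
        intro i
        have h9 := S9 i
        have hm : (0:ℝ) ≤ (μ (E i)).toReal := ENNReal.toReal_nonneg
        nlinarith
      calc ∑ i : Fin n, (yv i + ε) * (μ (E i)).toReal
          ≤ ∑ i : Fin n, ((∫ y in E i, f y ∂μ) + 2*ε*(μ (E i)).toReal) :=
            Finset.sum_le_sum fun i _ => h1 i
        _ = (∑ i : Fin n, ∫ y in E i, f y ∂μ) + 2*ε * ∑ i : Fin n, (μ (E i)).toReal := by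
            rw [Finset.sum_add_distrib, ← Finset.mul_sum]
        _ = (∑ i : Fin n, ∫ y in E i, f y ∂μ) + 2*ε := by rw [S7, mul_one]
    have hf0 : (0:ℝ) ≤ ‖f‖ := norm_nonneg f
    have hε2 : ε^2 ≤ ε := by nlinarith
    have hcv : c = ‖f‖ + ε := hc
    linarith [main1, main2, main3, main4, main5, main6, main7, S8.symm.le, S8.le]
  by_contra hcon
  push_neg at hcon
  have hpos8 : (0:ℝ) < 2*‖f‖+8 := by positivity
  set d := Λ f - ∫ y, f y ∂μ with hd
  have hd0 : 0 < d := by linarith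
  set ε := min 1 (d/(2*(2*‖f‖+8))) with hεdef
  have hε0 : 0 < ε := lt_min one_pos (by positivity)
  have hε1 : ε ≤ 1 := min_le_left _ _
  have h2 := key ε hε0 hε1
  have h3 : ε * (2*‖f‖+8) ≤ d/2 := by
    have h4 : ε ≤ d/(2*(2*‖f‖+8)) := min_le_right _ _
    calc ε*(2*‖f‖+8) ≤ (d/(2*(2*‖f‖+8)))*(2*‖f‖+8) :=
          mul_le_mul_of_nonneg_right h4 hpos8.le
      _ = d/2 := by field_simp
  linarith

theorem lam_eq_integral (hone : Λ (1 : C(Y,ℝ)) = 1) (f : C(Y,ℝ)) :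
    Λ f = ∫ y, f y ∂(rieszMeas Λ hadd hsmul hpos) := by
  refine le_antisymm (lam_le_integral Λ hadd hsmul hpos hone f) ?_
  have h1 := lam_le_integral Λ hadd hsmul hpos hone (-f)
  have h2 : Λ (-f) = - Λ f := by
    have := hsmul (-1) f
    simpa using this
  have h3 : ∫ y, (-f) y ∂(rieszMeas Λ hadd hsmul hpos)
      = - ∫ y, f y ∂(rieszMeas Λ hadd hsmul hpos) := by
    rw [← integral_neg]
    simp
  rw [h2, h3] at h1
  linarith

end main

end RMK

section GLim
open MeasureTheory Filter
namespace GeneralizedLimit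

theorem lim_const (L : GeneralizedLimit) (c : ℝ) : L.lim (fun _ => c) = c :=
  L.extends_limit _ c ⟨|c|, fun _ _ => le_refl _⟩ tendsto_const_nhds

theorem lim_congr (L : GeneralizedLimit) {f g : ℝ → ℝ}
    (hf : ∃ M, ∀ t ≥ (0:ℝ), |f t| ≤ M) (hg : ∃ M, ∀ t ≥ (0:ℝ), |g t| ≤ M)
    {T₀ : ℝ} (h : ∀ t ≥ T₀, f t = g t) : L.lim f = L.lim g := by
  obtain ⟨Mf, hMf⟩ := hf
  obtain ⟨Mg, hMg⟩ := hg
  have hfg : g = f + (g - f) := by funext t; simp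
  have hbd : ∃ M, ∀ t ≥ (0:ℝ), |(g - f) t| ≤ M := by
    refine ⟨Mg + Mf, fun t ht => ?_⟩
    have h1 := hMf t ht; have h2 := hMg t ht
    simp only [Pi.sub_apply]
    calc |g t - f t| ≤ |g t| + |f t| := abs_sub _ _
      _ ≤ Mg + Mf := by linarith
  have hzero : L.lim (g - f) = 0 := by
    refine L.extends_limit _ 0 hbd ?_
    have hev : (g - f) =ᶠ[atTop] (fun _ => 0) := by
      filter_upwards [eventually_ge_atTop T₀] with t ht
      simp [h t ht]
    exact Tendsto.congr' hev.symm tendsto_const_nhds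
  have := L.map_add f (g - f) ⟨Mf, hMf⟩ hbd
  rw [← hfg, hzero, add_zero] at this
  exact this.symm

end GeneralizedLimit

open scoped Classical in
noncomputable def ultraLim (F : Ultrafilter ℝ) (f : ℝ → ℝ) : ℝ :=
  if h : ∃ l, Filter.Tendsto f F (nhds l) then h.choose else 0

theorem ultraLim_eq (F : Ultrafilter ℝ) {f : ℝ → ℝ} {l : ℝ}
    (h : Filter.Tendsto f F (nhds l)) : ultraLim F f = l := by
  have hex : ∃ l, Filter.Tendsto f F (nhds l) := ⟨l, h⟩
  classical
  rw [ultraLim]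
  rw [dif_pos hex]
  exact tendsto_nhds_unique hex.choose_spec h

theorem ultra_tendsto (F : Ultrafilter ℝ) (hF : ↑F ≤ (atTop : Filter ℝ)) {f : ℝ → ℝ}
    (hb : ∃ M, ∀ t ≥ (0:ℝ), |f t| ≤ M) :
    Filter.Tendsto f F (nhds (ultraLim F f)) := by
  obtain ⟨M, hM⟩ := hb
  have hmem : ∀ᶠ t in (F : Filter ℝ), f t ∈ Set.Icc (-M) M := by
    have h0 : ∀ᶠ t in (F : Filter ℝ), t ≥ 0 := hF (eventually_ge_atTop 0)
    filter_upwards [h0] with t ht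
    have := hM t ht; rw [abs_le] at this; exact ⟨this.1, this.2⟩
  have hle : (Ultrafilter.map f F : Filter ℝ) ≤ Filter.principal (Set.Icc (-M) M) := by
    rw [Filter.le_principal_iff]; exact hmem
  obtain ⟨l, _, hl⟩ := (isCompact_Icc (a := -M) (b := M)).ultrafilter_le_nhds
    (Ultrafilter.map f F) hle
  have hten : Filter.Tendsto f F (nhds l) := hl
  rwa [ultraLim_eq F hten]

noncomputable def ultraGenLimit (F : Ultrafilter ℝ) (hF : ↑F ≤ (atTop : Filter ℝ)) :
    GeneralizedLimit where
  lim := ultraLim F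
  map_add f g hf hg := ultraLim_eq F ((ultra_tendsto F hF hf).add (ultra_tendsto F hF hg))
  map_smul c f hf := ultraLim_eq F ((ultra_tendsto F hF hf).const_mul c)
  extends_limit f l hb hl := ultraLim_eq F (hl.mono_left hF)
  pos f hb hf := by
    refine ge_of_tendsto (ultra_tendsto F hF hb) ?_
    filter_upwards [hF (eventually_ge_atTop 0)] with t ht using hf t ht

/-- an ultrafilter generalized limit realizing the limsup of a given bounded function -/
theorem exists_genLimit_limsup (f₀ : ℝ → ℝ) (hb : ∃ M, ∀ t ≥ (0:ℝ), |f₀ t| ≤ M) :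
    ∃ L : GeneralizedLimit, L.lim f₀ = Filter.limsup f₀ atTop := by
  obtain ⟨M, hM⟩ := hb
  set l := Filter.limsup f₀ atTop with hl
  have hbdd : IsBoundedUnder (· ≤ ·) atTop f₀ := by
    refine ⟨M, ?_⟩
    simp only [eventually_map]
    filter_upwards [eventually_ge_atTop (0:ℝ)] with t ht using (abs_le.mp (hM t ht)).2
  have hcobdd : IsCoboundedUnder (· ≤ ·) atTop f₀ := by
    refine IsBoundedUnder.isCoboundedUnder_le ?_
    refine ⟨-M, ?_⟩
    simp only [eventually_map]
    filter_upwards [eventually_ge_atTop (0:ℝ)] with t ht using (abs_le.mp (hM t ht)).1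
  have hfreq : ∀ W ∈ nhds l, ∃ᶠ t in (atTop : Filter ℝ), f₀ t ∈ W := by
    intro W hW
    obtain ⟨ε, hε, hball⟩ := Metric.mem_nhds_iff.mp hW
    have h1 : ∃ᶠ t in (atTop : Filter ℝ), l - ε < f₀ t :=
      Filter.frequently_lt_of_lt_limsup hcobdd (by linarith)
    have h2 : ∀ᶠ t in (atTop : Filter ℝ), f₀ t < l + ε :=
      Filter.eventually_lt_of_limsup_lt (by linarith) hbdd
    refine (h1.and_eventually h2).mono ?_
    rintro t ⟨ht1, ht2⟩
    apply hball
    rw [Metric.mem_ball, Real.dist_eq, abs_lt]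
    constructor <;> linarith
  have hne : (atTop ⊓ Filter.comap f₀ (nhds l)).NeBot := by
    rw [Filter.inf_neBot_iff]
    intro U hU V hV
    obtain ⟨W, hW, hWV⟩ := Filter.mem_comap.mp hV
    obtain ⟨a, ha⟩ := Filter.mem_atTop_sets.mp hU
    obtain ⟨t, hta, htW⟩ := ((hfreq W hW).and_eventually (eventually_ge_atTop a)).exists
    exact ⟨t, ha t htW, hWV hta⟩
  set F : Ultrafilter ℝ := Ultrafilter.of (atTop ⊓ Filter.comap f₀ (nhds l)) with hF
  have hFatTop : ↑F ≤ (atTop : Filter ℝ) := (Ultrafilter.of_le _).trans inf_le_left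
  have hFten : Filter.Tendsto f₀ F (nhds l) := by
    rw [Filter.tendsto_iff_comap]
    exact (Ultrafilter.of_le _).trans inf_le_right
  exact ⟨ultraGenLimit F hFatTop, ultraLim_eq F hFten⟩

end GLim

section Outer
open MeasureTheory Filter

variable {X : Type*} [TopologicalSpace X] [T2Space X] [MeasurableSpace X] [BorelSpace X]
variable (u : ℝ → X) (B : Set X)

/-- time average of `g` along the trajectory `u` -/
noncomputable def tavg (g : X → ℝ) : ℝ → ℝ := fun T => (1 / T) * ∫ t in (0:ℝ)..T, g (u t)

variable (hBclosed : IsClosed B)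
  (hu : ContinuousOn u (Set.Ici 0)) (huB : ∀ t ≥ (0:ℝ), u t ∈ B)

include hu huB in
theorem tavg_integrable {g : X → ℝ} (hg : ContinuousOn g B) {a b : ℝ} (ha : 0 ≤ a) (hb : 0 ≤ b) :
    IntervalIntegrable (fun t => g (u t)) volume a b := by
  have h1 : ContinuousOn (fun t => g (u t)) (Set.Ici 0) :=
    hg.comp hu fun t ht => huB t ht
  refine (h1.mono ?_).intervalIntegrable
  intro x hx
  rcases Set.mem_uIcc.mp hx with ⟨h, _⟩ | ⟨h, _⟩
  · exact le_trans ha h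
  · exact le_trans hb h

include huB in
theorem tavg_bound {g : X → ℝ} {M : ℝ} (hM : 0 ≤ M) (hgb : ∀ x ∈ B, |g x| ≤ M) :
    ∀ T ≥ (0:ℝ), |tavg u g T| ≤ M := by
  intro T hT
  rcases eq_or_lt_of_le hT with h0 | h0
  · simp [tavg, ← h0]; exact hM
  · have h1 : ‖∫ t in (0:ℝ)..T, g (u t)‖ ≤ M * |T - 0| := by
      refine intervalIntegral.norm_integral_le_of_norm_le_const fun x hx => ?_
      rw [Set.uIoc_of_le (le_of_lt h0)] at hx
      exact hgb _ (huB x hx.1.le)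
    rw [Real.norm_eq_abs, sub_zero, abs_of_pos h0] at h1
    rw [tavg, abs_mul, abs_of_pos (one_div_pos.mpr h0)]
    calc (1/T) * |∫ t in (0:ℝ)..T, g (u t)| ≤ (1/T) * (M * T) :=
          mul_le_mul_of_nonneg_left h1 (by positivity)
      _ = M := by field_simp

include hBclosed hu huB in
theorem tavg_tendsto_zero (K : Set X)
    (hattr : ∀ O : Set X, IsOpen O → K ⊆ O → ∃ T : ℝ, ∀ t ≥ T, u t ∈ O)
    {h : X → ℝ} (hc : ContinuousOn h B) {M : ℝ} (hM : 0 ≤ M) (hb : ∀ x ∈ B, |h x| ≤ M)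
    (hzero : ∀ x ∈ K ∩ B, h x = 0) :
    Filter.Tendsto (tavg u h) Filter.atTop (nhds 0) := by
  rw [Metric.tendsto_atTop]
  intro ε hε
  obtain ⟨V, hVopen, hVeq⟩ := (continuousOn_iff'.mp hc) (Metric.ball 0 (ε/2)) Metric.isOpen_ball
  set U := V ∪ Bᶜ with hU
  have hUopen : IsOpen U := hVopen.union hBclosed.isOpen_compl
  have hKU : K ⊆ U := by
    intro x hx
    by_cases hxB : x ∈ B
    · left
      have hmem : x ∈ h ⁻¹' Metric.ball 0 (ε/2) ∩ B := by
        refine ⟨?_, hxB⟩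
        simp only [Set.mem_preimage, Metric.mem_ball, dist_zero_right, Real.norm_eq_abs]
        rw [hzero x ⟨hx, hxB⟩]
        simpa using half_pos hε
      rw [hVeq] at hmem; exact hmem.1
    · right; exact hxB
  obtain ⟨T₀, hT₀⟩ := hattr U hUopen hKU
  set T₁ := max T₀ 0 with hT₁
  have hT₁0 : (0:ℝ) ≤ T₁ := le_max_right _ _
  have hsmall : ∀ t ≥ T₁, |h (u t)| < ε/2 := by
    intro t ht
    have htB : u t ∈ B := huB t (le_trans hT₁0 ht)
    have htU : u t ∈ U := hT₀ t (le_trans (le_max_left _ _) ht)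
    have htV : u t ∈ V := htU.resolve_right fun hc' => hc' htB
    have hmem : u t ∈ h ⁻¹' Metric.ball 0 (ε/2) ∩ B := by rw [hVeq]; exact ⟨htV, htB⟩
    have := hmem.1
    simpa [Metric.mem_ball, dist_zero_right, Real.norm_eq_abs] using this
  set N := max (T₁ + 1) (2 * M * T₁ / ε + 1) with hN
  refine ⟨N, fun T hT => ?_⟩
  have hTT₁ : T₁ < T := by
    have : T₁ + 1 ≤ N := le_max_left _ _
    linarith
  have hT0 : 0 < T := lt_of_le_of_lt hT₁0 hTT₁
  have hi1 : IntervalIntegrable (fun t => h (u t)) volume 0 T₁ :=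
    tavg_integrable u B hu huB hc (le_refl 0) hT₁0
  have hi2 : IntervalIntegrable (fun t => h (u t)) volume T₁ T :=
    tavg_integrable u B hu huB hc hT₁0 hT0.le
  have hsplit : ∫ t in (0:ℝ)..T, h (u t)
      = (∫ t in (0:ℝ)..T₁, h (u t)) + ∫ t in T₁..T, h (u t) :=
    (intervalIntegral.integral_add_adjacent_intervals hi1 hi2).symm
  have hb1 : |∫ t in (0:ℝ)..T₁, h (u t)| ≤ M * T₁ := by
    have h2 : ‖∫ t in (0:ℝ)..T₁, h (u t)‖ ≤ M * |T₁ - 0| := by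
      refine intervalIntegral.norm_integral_le_of_norm_le_const fun x hx => ?_
      rw [Set.uIoc_of_le hT₁0] at hx
      exact hb _ (huB x hx.1.le)
    rwa [Real.norm_eq_abs, sub_zero, abs_of_nonneg hT₁0] at h2
  have hb2 : |∫ t in T₁..T, h (u t)| ≤ (ε/2) * (T - T₁) := by
    have h2 : ‖∫ t in T₁..T, h (u t)‖ ≤ (ε/2) * |T - T₁| := by
      refine intervalIntegral.norm_integral_le_of_norm_le_const fun x hx => ?_
      rw [Set.uIoc_of_le hTT₁.le] at hx
      exact (hsmall x hx.1.le).le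
    rwa [Real.norm_eq_abs, abs_of_nonneg (sub_nonneg.mpr hTT₁.le)] at h2
  have habs : |tavg u h T| ≤ (M * T₁) / T + ε/2 := by
    rw [tavg, hsplit, abs_mul, abs_of_pos (one_div_pos.mpr hT0)]
    have h3 : |(∫ t in (0:ℝ)..T₁, h (u t)) + ∫ t in T₁..T, h (u t)|
        ≤ M * T₁ + (ε/2) * (T - T₁) :=
      le_trans (abs_add_le _ _) (by linarith)
    calc (1/T) * |(∫ t in (0:ℝ)..T₁, h (u t)) + ∫ t in T₁..T, h (u t)|
        ≤ (1/T) * (M * T₁ + (ε/2) * (T - T₁)) :=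
          mul_le_mul_of_nonneg_left h3 (by positivity)
      _ ≤ (M * T₁) / T + ε/2 := by
          rw [mul_add]
          have e1 : (1/T) * (M * T₁) = (M * T₁) / T := by ring
          have e2 : (1/T) * ((ε/2) * (T - T₁)) ≤ ε/2 := by
            rw [div_mul_eq_mul_div, one_mul, div_le_iff₀ hT0]
            nlinarith
          linarith
  have hfin : (M * T₁) / T < ε/2 := by
    rw [div_lt_iff₀ hT0]
    have hTbig : 2 * M * T₁ / ε + 1 ≤ T := le_trans (le_max_right _ _) hT
    have h4 : (ε/2) * (2 * M * T₁ / ε + 1) ≤ (ε/2) * T :=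
      mul_le_mul_of_nonneg_left hTbig (by positivity)
    have h5 : (ε/2) * (2 * M * T₁ / ε + 1) = M * T₁ + ε/2 := by
      field_simp
    nlinarith
  rw [Real.dist_eq, sub_zero]
  linarith

end Outer

/-- Time-average measures: for a continuous trajectory in a closed normal set `B`
attracted by a compact set `K`, any generalized limit of the time averages is
represented by a Borel probability measure carried by `K ∩ B`; moreover, for a given
`φ₀ ∈ C_b(B)`, the generalized limit and the measure can be chosen so that the mean of
`φ₀` equals the limsup of its time averages. -/
theorem stmt10 {X : Type*} [TopologicalSpace X] [T2Space X] [MeasurableSpace X] [BorelSpace X]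
    (B : Set X) (hBclosed : IsClosed B) [NormalSpace B]
    (u : ℝ → X) (hu : ContinuousOn u (Set.Ici 0)) (huB : ∀ t ≥ (0:ℝ), u t ∈ B)
    (K : Set X) (hK : IsCompact K)
    (hattr : ∀ O : Set X, IsOpen O → K ⊆ O → ∃ T : ℝ, ∀ t ≥ T, u t ∈ O)
    (L : GeneralizedLimit) :
    (∃ μ : Measure X, IsProbabilityMeasure μ ∧ μ ((K ∩ B)ᶜ) = 0 ∧
      ∀ φ : X → ℝ, ContinuousOn φ B → (∃ M, ∀ x ∈ B, |φ x| ≤ M) →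
        L.lim (fun T => (1 / T) * ∫ t in (0:ℝ)..T, φ (u t)) = ∫ x, φ x ∂μ) ∧
    (∀ φ₀ : X → ℝ, ContinuousOn φ₀ B → (∃ M, ∀ x ∈ B, |φ₀ x| ≤ M) →
      ∃ (L' : GeneralizedLimit) (μ : Measure X), IsProbabilityMeasure μ ∧ μ ((K ∩ B)ᶜ) = 0 ∧
        (∀ φ : X → ℝ, ContinuousOn φ B → (∃ M, ∀ x ∈ B, |φ x| ≤ M) →
          L'.lim (fun T => (1 / T) * ∫ t in (0:ℝ)..T, φ (u t)) = ∫ x, φ x ∂μ) ∧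
        ∫ x, φ₀ x ∂μ =
          limsup (fun T => (1 / T) * ∫ t in (0:ℝ)..T, φ₀ (u t)) atTop) := by

  classical
  have hScomp : IsCompact (K ∩ B) := hK.inter_right hBclosed
  have hSmeas : MeasurableSet (K ∩ B) := hScomp.isClosed.measurableSet
  have hemb : MeasurableEmbedding (Subtype.val : (K ∩ B : Set X) → X) :=
    MeasurableEmbedding.subtype_coe hSmeas
  haveI : CompactSpace (K ∩ B : Set X) := isCompact_iff_compactSpace.mp hScomp
  haveI : BorelSpace (K ∩ B : Set X) := Subtype.borelSpace _
  -- extension of continuous functions on K ∩ B to B (Tietze + truncation)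
  have hext : ∀ ψ : C((K ∩ B : Set X), ℝ), ∃ g : X → ℝ, ContinuousOn g B ∧
      (∀ x ∈ B, |g x| ≤ ‖ψ‖) ∧ ∀ (x : X) (hx : x ∈ K ∩ B), g x = ψ ⟨x, hx⟩ := by
    intro ψ
    set S' : Set B := Subtype.val ⁻¹' K with hS'
    have hS'closed : IsClosed S' := hK.isClosed.preimage continuous_subtype_val
    set ψ' : C(S', ℝ) := ⟨fun b => ψ ⟨b.1.1, ⟨b.2, b.1.2⟩⟩,
      ψ.continuous.comp ((continuous_subtype_val.comp continuous_subtype_val).subtype_mk _)⟩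
      with hψ'
    obtain ⟨g₀, hg₀⟩ := ContinuousMap.exists_restrict_eq hS'closed ψ'
    set M := ‖ψ‖ with hMdef
    have hM0 : 0 ≤ M := norm_nonneg ψ
    set g₁ : B → ℝ := fun b => max (-M) (min M (g₀ b)) with hg₁
    have hg₁cont : Continuous g₁ := continuous_const.max (continuous_const.min g₀.continuous)
    refine ⟨fun x => if hx : x ∈ B then g₁ ⟨x, hx⟩ else 0, ?_, ?_, ?_⟩
    · rw [continuousOn_iff_continuous_restrict]
      have : B.restrict (fun x => if hx : x ∈ B then g₁ ⟨x, hx⟩ else 0) = g₁ := by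
        funext b
        simp [Set.restrict, b.2]
      change Continuous (B.restrict (fun x => if hx : x ∈ B then g₁ ⟨x, hx⟩ else 0))
      rw [this]; exact hg₁cont
    · intro x hx
      simp only [dif_pos hx]
      rw [abs_le]
      exact ⟨le_max_left _ _, max_le (by linarith) (min_le_left _ _)⟩
    · intro x hx
      have hxB : x ∈ B := hx.2
      simp only [dif_pos hxB]
      have hb : (⟨x, hxB⟩ : B) ∈ S' := hx.1
      have hval : g₀ ⟨x, hxB⟩ = ψ ⟨x, hx⟩ := by
        have h1 := DFunLike.congr_fun hg₀ (⟨⟨x, hxB⟩, hb⟩ : S')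
        simpa [ContinuousMap.restrict_apply, hψ'] using h1
      have habs : |ψ ⟨x, hx⟩| ≤ M := by
        have := ψ.norm_coe_le_norm ⟨x, hx⟩
        rwa [Real.norm_eq_abs] at this
      rw [abs_le] at habs
      rw [hg₁]
      simp only []
      rw [hval, min_eq_right habs.2, max_eq_right habs.1]
  choose ext hextc hextb hexteq using hext
  -- main construction for an arbitrary generalized limit
  have main : ∀ L' : GeneralizedLimit, ∃ μ : Measure X, IsProbabilityMeasure μ ∧
      μ ((K ∩ B)ᶜ) = 0 ∧
      ∀ φ : X → ℝ, ContinuousOn φ B → (∃ M, ∀ x ∈ B, |φ x| ≤ M) →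
        L'.lim (fun T => (1 / T) * ∫ t in (0:ℝ)..T, φ (u t)) = ∫ x, φ x ∂μ := by
    intro L'
    -- well-definedness (key analytic ingredient)
    have welldef : ∀ (g₁ g₂ : X → ℝ), ContinuousOn g₁ B → ContinuousOn g₂ B →
        ∀ (M₁ M₂ : ℝ), 0 ≤ M₁ → 0 ≤ M₂ → (∀ x ∈ B, |g₁ x| ≤ M₁) → (∀ x ∈ B, |g₂ x| ≤ M₂) →
        (∀ x ∈ K ∩ B, g₁ x = g₂ x) →
        L'.lim (tavg u g₁) = L'.lim (tavg u g₂) := by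
      intro g₁ g₂ hc₁ hc₂ M₁ M₂ hM₁ hM₂ hb₁ hb₂ heq
      set h : X → ℝ := fun x => g₁ x - g₂ x with hh
      have hch : ContinuousOn h B := hc₁.sub hc₂
      have hbh : ∀ x ∈ B, |h x| ≤ M₁ + M₂ := by
        intro x hx
        simp only [hh]
        calc |g₁ x - g₂ x| ≤ |g₁ x| + |g₂ x| := abs_sub _ _
          _ ≤ M₁ + M₂ := add_le_add (hb₁ x hx) (hb₂ x hx)
      have hzero : ∀ x ∈ K ∩ B, h x = 0 := fun x hx => by simp [hh, heq x hx]
      have htend : Tendsto (tavg u h) atTop (nhds 0) :=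
        tavg_tendsto_zero u B hBclosed hu huB K hattr hch (by linarith) hbh hzero
      have hptw : ∀ t ≥ (0:ℝ), tavg u g₁ t = (tavg u g₂ + tavg u h) t := by
        intro t ht
        simp only [Pi.add_apply, tavg]
        rw [← mul_add, ← intervalIntegral.integral_add
          (tavg_integrable u B hu huB hc₂ le_rfl ht) (tavg_integrable u B hu huB hch le_rfl ht)]
        congr 1
        apply intervalIntegral.integral_congr
        intro s _
        simp [hh]
      have hb₁' := tavg_bound u B huB hM₁ hb₁
      have hb₂' := tavg_bound u B huB hM₂ hb₂
      have hbh' := tavg_bound u B huB (show (0:ℝ) ≤ M₁ + M₂ by linarith) hbh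
      have hsum_bdd : ∃ M, ∀ t ≥ (0:ℝ), |(tavg u g₂ + tavg u h) t| ≤ M := by
        refine ⟨M₂ + (M₁ + M₂), fun t ht => ?_⟩
        simp only [Pi.add_apply]
        calc |tavg u g₂ t + tavg u h t| ≤ |tavg u g₂ t| + |tavg u h t| := abs_add_le _ _
          _ ≤ M₂ + (M₁ + M₂) := add_le_add (hb₂' t ht) (hbh' t ht)
      have h1 : L'.lim (tavg u g₁) = L'.lim (tavg u g₂ + tavg u h) :=
        L'.lim_congr ⟨M₁, hb₁'⟩ hsum_bdd (T₀ := 0) hptw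
      rw [h1, L'.map_add _ _ ⟨M₂, hb₂'⟩ ⟨M₁ + M₂, hbh'⟩,
        L'.extends_limit (tavg u h) 0 ⟨M₁ + M₂, hbh'⟩ htend, add_zero]
    -- the functional
    set Λ : C((K ∩ B : Set X), ℝ) → ℝ := fun ψ => L'.lim (tavg u (ext ψ)) with hΛ
    have hψabs : ∀ (ψ : C((K ∩ B : Set X), ℝ)) (y), |ψ y| ≤ ‖ψ‖ := by
      intro ψ y
      have := ψ.norm_coe_le_norm y
      rwa [Real.norm_eq_abs] at this
    have hadd : ∀ ψ₁ ψ₂, Λ (ψ₁ + ψ₂) = Λ ψ₁ + Λ ψ₂ := by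
      intro ψ₁ ψ₂
      have h1 : Λ (ψ₁ + ψ₂) = L'.lim (tavg u (fun x => ext ψ₁ x + ext ψ₂ x)) := by
        refine welldef _ _ (hextc _) ((hextc ψ₁).add (hextc ψ₂)) ‖ψ₁ + ψ₂‖ (‖ψ₁‖ + ‖ψ₂‖)
          (norm_nonneg _) (by positivity) (hextb _) ?_ ?_
        · intro x hx
          calc |ext ψ₁ x + ext ψ₂ x| ≤ |ext ψ₁ x| + |ext ψ₂ x| := abs_add_le _ _
            _ ≤ ‖ψ₁‖ + ‖ψ₂‖ := add_le_add (hextb ψ₁ x hx) (hextb ψ₂ x hx)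
        · intro x hx
          rw [hexteq (ψ₁ + ψ₂) x hx, hexteq ψ₁ x hx, hexteq ψ₂ x hx]
          simp
      have hptw : ∀ t ≥ (0:ℝ), tavg u (fun x => ext ψ₁ x + ext ψ₂ x) t
          = (tavg u (ext ψ₁) + tavg u (ext ψ₂)) t := by
        intro t ht
        simp only [Pi.add_apply, tavg]
        rw [← mul_add, ← intervalIntegral.integral_add
          (tavg_integrable u B hu huB (hextc ψ₁) le_rfl ht)
          (tavg_integrable u B hu huB (hextc ψ₂) le_rfl ht)]
      have hb₁' := tavg_bound u B huB (norm_nonneg ψ₁) (hextb ψ₁)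
      have hb₂' := tavg_bound u B huB (norm_nonneg ψ₂) (hextb ψ₂)
      have hbsum : ∀ x ∈ B, |ext ψ₁ x + ext ψ₂ x| ≤ ‖ψ₁‖ + ‖ψ₂‖ := by
        intro x hx
        calc |ext ψ₁ x + ext ψ₂ x| ≤ |ext ψ₁ x| + |ext ψ₂ x| := abs_add_le _ _
          _ ≤ ‖ψ₁‖ + ‖ψ₂‖ := add_le_add (hextb ψ₁ x hx) (hextb ψ₂ x hx)
      have hbs' := tavg_bound u B huB (show (0:ℝ) ≤ ‖ψ₁‖ + ‖ψ₂‖ by positivity) hbsum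
      have h2 : L'.lim (tavg u (fun x => ext ψ₁ x + ext ψ₂ x))
          = L'.lim (tavg u (ext ψ₁) + tavg u (ext ψ₂)) := by
        refine L'.lim_congr ⟨‖ψ₁‖ + ‖ψ₂‖, hbs'⟩ ?_ (T₀ := 0) hptw
        refine ⟨‖ψ₁‖ + ‖ψ₂‖, fun t ht => ?_⟩
        simp only [Pi.add_apply]
        calc |tavg u (ext ψ₁) t + tavg u (ext ψ₂) t|
            ≤ |tavg u (ext ψ₁) t| + |tavg u (ext ψ₂) t| := abs_add_le _ _
          _ ≤ ‖ψ₁‖ + ‖ψ₂‖ := add_le_add (hb₁' t ht) (hb₂' t ht)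
      rw [h1, h2, L'.map_add _ _ ⟨‖ψ₁‖, hb₁'⟩ ⟨‖ψ₂‖, hb₂'⟩]
    have hsmul : ∀ (c : ℝ) (ψ), Λ (c • ψ) = c * Λ ψ := by
      intro c ψ
      have h1 : Λ (c • ψ) = L'.lim (tavg u (fun x => c * ext ψ x)) := by
        refine welldef _ _ (hextc _) ((hextc ψ).const_smul c) ‖c • ψ‖ (|c| * ‖ψ‖)
          (norm_nonneg _) (by positivity) (hextb _) ?_ ?_
        · intro x hx
          rw [abs_mul]
          exact mul_le_mul_of_nonneg_left (hextb ψ x hx) (abs_nonneg c)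
        · intro x hx
          rw [hexteq (c • ψ) x hx, hexteq ψ x hx]
          simp
      have h2 : tavg u (fun x => c * ext ψ x) = c • tavg u (ext ψ) := by
        funext t
        simp only [Pi.smul_apply, smul_eq_mul, tavg]
        rw [intervalIntegral.integral_const_mul]
        ring
      rw [h1, h2, L'.map_smul c _ ⟨‖ψ‖, tavg_bound u B huB (norm_nonneg ψ) (hextb ψ)⟩]
    have hpos : ∀ ψ : C((K ∩ B : Set X), ℝ), (∀ y, 0 ≤ ψ y) → 0 ≤ Λ ψ := by
      intro ψ hψ
      set g : X → ℝ := fun x => max (ext ψ x) 0 with hg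
      have hgc : ContinuousOn g B := by
        have : Continuous fun a : ℝ => max a 0 := continuous_id.max continuous_const
        exact this.comp_continuousOn (hextc ψ)
      have hgb : ∀ x ∈ B, |g x| ≤ ‖ψ‖ := by
        intro x hx
        rcases le_total (ext ψ x) 0 with h | h
        · simp only [hg, max_eq_right h]
          simpa using norm_nonneg ψ
        · simp only [hg, max_eq_left h]
          rw [abs_of_nonneg h]
          exact le_trans (le_abs_self _) (hextb ψ x hx)
      have h1 : Λ ψ = L'.lim (tavg u g) := by
        refine welldef _ _ (hextc _) hgc ‖ψ‖ ‖ψ‖ (norm_nonneg _) (norm_nonneg _)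
          (hextb _) hgb ?_
        intro x hx
        rw [hexteq ψ x hx, hg]
        simp only []
        rw [hexteq ψ x hx, max_eq_left (hψ _)]
      rw [h1]
      refine L'.pos _ ⟨‖ψ‖, tavg_bound u B huB (norm_nonneg ψ) hgb⟩ ?_
      intro t ht
      rcases eq_or_lt_of_le ht with h0 | h0
      · simp [tavg, ← h0]
      · rw [tavg]
        have hint : 0 ≤ ∫ s in (0:ℝ)..t, g (u s) := by
          refine intervalIntegral.integral_nonneg h0.le fun s _ => ?_
          exact le_max_right _ _
        positivity
    have hone : Λ (1 : C((K ∩ B : Set X), ℝ)) = 1 := by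
      have h1 : Λ 1 = L'.lim (tavg u (fun _ => 1)) := by
        refine welldef _ _ (hextc _) continuousOn_const ‖(1 : C((K ∩ B : Set X), ℝ))‖ 1
          (norm_nonneg _) zero_le_one (hextb _) (fun x _ => by simp) ?_
        intro x hx
        rw [hexteq 1 x hx]
        simp
      have hconst : ∀ t ≥ (1:ℝ), tavg u (fun _ => (1:ℝ)) t = 1 := by
        intro t ht
        rw [tavg, intervalIntegral.integral_const, sub_zero, smul_eq_mul, mul_one]
        field_simp
      have hb1 := tavg_bound u B huB zero_le_one (g := fun _ => (1:ℝ))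
        (fun x _ => by norm_num)
      have h2 : L'.lim (tavg u (fun _ => (1:ℝ))) = L'.lim (fun _ => (1:ℝ)) :=
        L'.lim_congr ⟨1, hb1⟩ ⟨1, fun t _ => by norm_num⟩ (T₀ := 1) hconst
      rw [h1, h2, L'.lim_const]
    -- the measure
    set μY := rieszMeas Λ hadd hsmul hpos with hμY
    haveI hprob : IsProbabilityMeasure μY := rieszMeas_prob Λ hadd hsmul hpos hone
    refine ⟨μY.map Subtype.val, Measure.isProbabilityMeasure_map hemb.measurable.aemeasurable, ?_, ?_⟩
    · rw [Measure.map_apply hemb.measurable hSmeas.compl]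
      have : (Subtype.val : (K ∩ B : Set X) → X) ⁻¹' (K ∩ B)ᶜ = ∅ := by
        ext y
        simp only [Set.mem_preimage, Set.mem_compl_iff, Set.mem_empty_iff_false, iff_false,
          not_not]
        exact y.2
      rw [this, measure_empty]
    · intro φ hφc hφb
      obtain ⟨M, hM⟩ := hφb
      have hM' : ∀ x ∈ B, |φ x| ≤ max M 0 := fun x hx => le_trans (hM x hx) (le_max_left _ _)
      set ψφ : C((K ∩ B : Set X), ℝ) := ⟨fun y => φ y.1,
        hφc.comp_continuous continuous_subtype_val (fun y => y.2.2)⟩ with hψφ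
      have hL1 : L'.lim (tavg u φ) = Λ ψφ := by
        show L'.lim (tavg u φ) = L'.lim (tavg u (ext ψφ))
        refine welldef _ _ hφc (hextc ψφ) (max M 0) ‖ψφ‖ (le_max_right _ _)
          (norm_nonneg _) hM' (hextb _) ?_
        intro x hx
        rw [hexteq ψφ x hx]
        rfl
      have hL2 : Λ ψφ = ∫ y, ψφ y ∂μY :=
        lam_eq_integral Λ hadd hsmul hpos hone ψφ
      have hL3 : ∫ y, ψφ y ∂μY = ∫ x, φ x ∂(μY.map Subtype.val) :=
        (hemb.integral_map φ).symm
      exact (hL1.trans hL2).trans hL3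
  refine ⟨main L, fun φ₀ hφ₀c hφ₀b => ?_⟩
  obtain ⟨M₀, hM₀⟩ := hφ₀b
  have hb₀ : ∃ M, ∀ t ≥ (0:ℝ), |tavg u φ₀ t| ≤ M :=
    ⟨max M₀ 0, tavg_bound u B huB (le_max_right _ _)
      (fun x hx => le_trans (hM₀ x hx) (le_max_left _ _))⟩
  obtain ⟨L', hL'⟩ := exists_genLimit_limsup (tavg u φ₀) hb₀
  obtain ⟨μ, hμ1, hμ2, hμ3⟩ := main L'
  refine ⟨L', μ, hμ1, hμ2, hμ3, ?_⟩
  exact ((hμ3 φ₀ hφ₀c ⟨M₀, hM₀⟩).symm.trans hL' : _)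
end

section
/- Let X be a Hausdorff topological space with continuous inclusion X ⊂ W′ for a Banach space W, let F : X → W′ be a Borel map, and let {S(t)} be a continuous semigroup on X associated with the equation du/dt = F(u). Let E ⊆ X be a Borel set invariant under the semigroup on which F is bounded, and let μ be an invariant Borel probability measure carried by E. Then for every cylindrical test functional Ψ on W′, ∫_X ⟨F(v), Ψ′(v)⟩_{W′,W} dμ(v) = 0; i.e., every invariant measure is a weak stationary statistical solution. -/
open MeasureTheory NormedSpace

/-- Every invariant measure of a continuous semigroup associated with the equation
`du/dt = F(u)`, carried by a positively invariant Borel set on which `F` is bounded,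
is a weak stationary statistical solution: `∫ ⟨F(v), Ψ'(v)⟩ dμ = 0` for every
cylindrical test functional `Ψ`. -/
theorem stmt13 {W X : Type*} [NormedAddCommGroup W] [NormedSpace ℝ W] [CompleteSpace W]
    [TopologicalSpace X] [T2Space X] [MeasurableSpace X] [BorelSpace X]
    (ι : X → StrongDual ℝ W) (hι : Continuous ι) (hinj : Function.Injective ι)
    (F : X → StrongDual ℝ W) (hF : Measurable F)
    (S : ℝ → X → X) (hScont : Continuous fun p : ℝ × X => S p.1 p.2)
    (hS0 : ∀ x, S 0 x = x)
    (hSadd : ∀ t ≥ (0:ℝ), ∀ s ≥ (0:ℝ), ∀ x, S (t + s) x = S t (S s x))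
    (hassoc : ∀ (x : X) (w0 : W) (t : ℝ), 0 ≤ t →
      HasDerivWithinAt (fun s => ι (S s x) w0) (F (S t x) w0) (Set.Ici 0) t)
    (E : Set X) (hE : MeasurableSet E) (hEinv : ∀ t ≥ (0:ℝ), ∀ x ∈ E, S t x ∈ E)
    (M : ℝ) (hFbdd : ∀ x ∈ E, ‖F x‖ ≤ M)
    (μ : Measure X) [IsProbabilityMeasure μ] (hcar : μ Eᶜ = 0)
    (hinv : ∀ t ≥ (0:ℝ), ∀ A : Set X, MeasurableSet A → μ (S t ⁻¹' A) = μ A)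
    (m : ℕ) (ψ : (Fin m → ℝ) → ℝ) (w : Fin m → W)
    (hψ : ContDiff ℝ 1 ψ) (hsupp : HasCompactSupport ψ) :
    ∫ x, F x (∑ j, fderiv ℝ ψ (fun i => ι x (w i)) (Pi.single j 1) • w j) ∂μ = 0 := by
  classical
  set Λ : X → (Fin m → ℝ) := fun x i => ι x (w i) with hΛdef
  set V : X → W := fun x => ∑ j, fderiv ℝ ψ (Λ x) (Pi.single j 1) • w j with hVdef
  set G : X → ℝ := fun x => F x (V x) with hGdef
  set Φ : X → ℝ := fun x => ψ (Λ x) with hΦdef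
  -- basic continuity facts
  have hΛcont : Continuous Λ :=
    continuous_pi fun i => hι.clm_apply continuous_const
  have hfψ : Continuous (fderiv ℝ ψ) := hψ.continuous_fderiv one_ne_zero
  have hVcont : Continuous V := by
    apply continuous_finset_sum
    intro j _
    exact ((hfψ.comp hΛcont).clm_apply continuous_const).smul continuous_const
  have hΦcont : Continuous Φ := hψ.continuous.comp hΛcont
  -- measurability of G
  have hGeval : ∀ j : Fin m, Measurable fun x => F x (w j) := by
    intro j
    have hcont : Continuous fun L : StrongDual ℝ W => L (w j) :=
      continuous_id.clm_apply continuous_const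
    exact hcont.measurable.comp hF
  have hGeq : G = fun x => ∑ j, fderiv ℝ ψ (Λ x) (Pi.single j 1) * F x (w j) := by
    funext x
    simp only [hGdef, hVdef, map_sum]
    exact Finset.sum_congr rfl fun j _ => by rw [_root_.map_smul, smul_eq_mul]
  have hGmeas : Measurable G := by
    rw [hGeq]
    apply Finset.measurable_sum
    intro j _
    exact (((hfψ.comp hΛcont).clm_apply continuous_const).measurable).mul (hGeval j)
  -- bounds
  obtain ⟨K, hK⟩ := (hsupp.fderiv ℝ).exists_bound_of_continuous hfψ
  have hK0 : (0:ℝ) ≤ K := le_trans (norm_nonneg _) (hK 0)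
  have hc : ∀ (j : Fin m) (y : Fin m → ℝ), ‖fderiv ℝ ψ y (Pi.single j 1)‖ ≤ K := by
    intro j y
    calc ‖fderiv ℝ ψ y (Pi.single j 1)‖ ≤ ‖fderiv ℝ ψ y‖ * ‖(Pi.single j 1 : Fin m → ℝ)‖ :=
          (fderiv ℝ ψ y).le_opNorm _
      _ = ‖fderiv ℝ ψ y‖ := by rw [Pi.norm_single, norm_one, mul_one]
      _ ≤ K := hK y
  have hVbd : ∀ x, ‖V x‖ ≤ K * ∑ j, ‖w j‖ := by
    intro x
    calc ‖V x‖ ≤ ∑ j, ‖fderiv ℝ ψ (Λ x) (Pi.single j 1) • w j‖ := norm_sum_le _ _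
      _ ≤ ∑ j, K * ‖w j‖ := by
          refine Finset.sum_le_sum fun j _ => ?_
          rw [norm_smul]
          exact mul_le_mul_of_nonneg_right (hc j (Λ x)) (norm_nonneg _)
      _ = K * ∑ j, ‖w j‖ := (Finset.mul_sum _ _ _).symm
  set C : ℝ := (max M 0) * (K * ∑ j, ‖w j‖) with hCdef
  have hGbd : ∀ y ∈ E, ‖G y‖ ≤ C := by
    intro y hy
    calc ‖G y‖ ≤ ‖F y‖ * ‖V y‖ := (F y).le_opNorm _
      _ ≤ (max M 0) * (K * ∑ j, ‖w j‖) := by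
          apply mul_le_mul ((hFbdd y hy).trans (le_max_left _ _)) (hVbd y) (norm_nonneg _)
            (le_max_right _ _)
  obtain ⟨Kψ, hKψ⟩ := hsupp.exists_bound_of_continuous hψ.continuous
  -- measure preservation
  have hSmeas : ∀ t : ℝ, Measurable (S t) := by
    intro t
    exact (hScont.comp (continuous_const.prodMk continuous_id)).measurable
  have hMP : ∀ t ≥ (0:ℝ), MeasurePreserving (S t) μ μ := by
    intro t ht
    refine ⟨hSmeas t, ?_⟩
    ext A hA
    rw [Measure.map_apply (hSmeas t) hA]
    exact hinv t ht A hA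
  have hint_inv : ∀ (h : X → ℝ), Measurable h → ∀ t ≥ (0:ℝ),
      ∫ x, h (S t x) ∂μ = ∫ x, h x ∂μ := by
    intro h mh t ht
    have hmap := (hMP t ht).map_eq
    calc ∫ x, h (S t x) ∂μ = ∫ y, h y ∂(Measure.map (S t) μ) :=
          (integral_map (hSmeas t).aemeasurable (by rw [hmap]; exact mh.aestronglyMeasurable)).symm
      _ = ∫ y, h y ∂μ := by rw [hmap]
  -- algebraic identity for the pairing
  have key : ∀ (L : StrongDual ℝ W) (y : Fin m → ℝ),
      L (∑ j, fderiv ℝ ψ y (Pi.single j 1) • w j) = fderiv ℝ ψ y (fun i => L (w i)) := by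
    intro L y
    have hrepr : (fun i => L (w i)) = ∑ j, Pi.single j (L (w j)) :=
      (Finset.univ_sum_single _).symm
    rw [map_sum, hrepr, map_sum]
    refine Finset.sum_congr rfl fun j _ => ?_
    have h1 : (Pi.single j (L (w j)) : Fin m → ℝ) = (L (w j)) • ((Pi.single j (1:ℝ)) : Fin m → ℝ) := by
      ext i
      by_cases h : i = j <;> simp [Pi.single_apply, h]
    rw [h1, _root_.map_smul, _root_.map_smul, smul_eq_mul, smul_eq_mul, mul_comm]
  -- chain rule
  have hderiv : ∀ (x : X), ∀ t ≥ (0:ℝ),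
      HasDerivWithinAt (fun s => Φ (S s x)) (G (S t x)) (Set.Ici 0) t := by
    intro x t ht
    have hlam : HasDerivWithinAt (fun s => Λ (S s x)) (fun i => F (S t x) (w i)) (Set.Ici 0) t :=
      hasDerivWithinAt_pi.2 fun i => hassoc x (w i) t ht
    have hψd : HasFDerivAt ψ (fderiv ℝ ψ (Λ (S t x))) (Λ (S t x)) :=
      (hψ.differentiable one_ne_zero (Λ (S t x))).hasFDerivAt
    have hcomp := hψd.comp_hasDerivWithinAt t hlam
    have : G (S t x) = fderiv ℝ ψ (Λ (S t x)) (fun i => F (S t x) (w i)) := key _ _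
    rw [this]
    exact hcomp
  -- fundamental theorem of calculus on [0, 1]
  have hFTC : ∀ x ∈ E, ∫ s in (0:ℝ)..1, G (S s x) = Φ (S 1 x) - Φ (S 0 x) := by
    intro x hx
    apply intervalIntegral.integral_eq_sub_of_hasDeriv_right_of_le
      (f := fun s => Φ (S s x)) (f' := fun s => G (S s x)) zero_le_one
    · exact (hΦcont.comp (hScont.comp (continuous_id.prodMk continuous_const))).continuousOn
    · intro s hs
      exact (hderiv x s hs.1.le).mono fun y hy => le_of_lt (hs.1.trans hy)
    · rw [intervalIntegrable_iff_integrableOn_Icc_of_le zero_le_one]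
      refine Measure.integrableOn_of_bounded (M := C) (by simp) ?_ ?_
      · exact (hGmeas.comp
          (hScont.comp (continuous_id.prodMk continuous_const)).measurable).aestronglyMeasurable
      · filter_upwards [ae_restrict_mem measurableSet_Icc] with s hs
        exact hGbd _ (hEinv s hs.1 x hx)
  -- Φ is integrable and so is Φ ∘ S 1
  have hbddInt : ∀ (g : X → ℝ), Continuous g → (∀ y, ‖g y‖ ≤ Kψ) → Integrable g μ := by
    intro g hg hb
    exact (integrable_const Kψ).mono' hg.aestronglyMeasurable (Filter.Eventually.of_forall hb)
  have hΦSint : Integrable (fun x => Φ (S 1 x)) μ := by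
    refine hbddInt _ (hΦcont.comp (hScont.comp (continuous_const.prodMk continuous_id))) ?_
    intro y; exact hKψ _
  have hΦint : Integrable Φ μ := hbddInt Φ hΦcont (fun y => hKψ _)
  have h0 : ∫ x, (Φ (S 1 x) - Φ x) ∂μ = 0 := by
    rw [integral_sub hΦSint hΦint, hint_inv Φ hΦcont.measurable 1 zero_le_one, sub_self]
  have haeE : ∀ᵐ x ∂μ, x ∈ E := by
    rw [ae_iff]
    simpa [Set.compl_def] using hcar
  have h1 : ∫ x, (∫ s in (0:ℝ)..1, G (S s x)) ∂μ = 0 := by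
    refine Eq.trans (integral_congr_ae ?_) h0
    filter_upwards [haeE] with x hx
    rw [hFTC x hx, hS0]
  -- Fubini
  set ν : Measure ℝ := volume.restrict (Set.Ioc (0:ℝ) 1) with hνdef
  have hform : ∀ x, ∫ s in (0:ℝ)..1, G (S s x) = ∫ s, G (S s x) ∂ν := fun x =>
    intervalIntegral.integral_of_le zero_le_one
  have hprodmeas : Measurable fun p : X × ℝ => G (S p.2 p.1) :=
    hGmeas.comp (hScont.measurable.comp (measurable_snd.prodMk measurable_fst))
  have hnull1 : (μ.prod ν) (Eᶜ ×ˢ (Set.univ : Set ℝ)) = 0 := by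
    rw [Measure.prod_prod, hcar, zero_mul]
  have hnull2 : (μ.prod ν) ((Set.univ : Set X) ×ˢ (Set.Ioc (0:ℝ) 1)ᶜ) = 0 := by
    have hν0 : ν (Set.Ioc (0:ℝ) 1)ᶜ = 0 := by
      rw [hνdef, Measure.restrict_apply measurableSet_Ioc.compl]
      simp
    rw [Measure.prod_prod, hν0, mul_zero]
  have haebound : ∀ᵐ p : X × ℝ ∂(μ.prod ν), ‖G (S p.2 p.1)‖ ≤ C := by
    rw [ae_iff]
    refine measure_mono_null ?_ (measure_union_null hnull1 hnull2)
    intro p hp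
    simp only [Set.mem_setOf_eq, not_le] at hp
    by_cases h : p.1 ∈ E
    · by_cases h' : p.2 ∈ Set.Ioc (0:ℝ) 1
      · exact absurd (hGbd _ (hEinv p.2 h'.1.le p.1 h)) (not_le.2 hp)
      · exact Or.inr ⟨Set.mem_univ _, h'⟩
    · exact Or.inl ⟨h, Set.mem_univ _⟩
  have hintprod : Integrable (Function.uncurry fun x s => G (S s x)) (μ.prod ν) :=
    (integrable_const C).mono' hprodmeas.aestronglyMeasurable haebound
  have hswap : ∫ x, ∫ s, G (S s x) ∂ν ∂μ = ∫ s, ∫ x, G (S s x) ∂μ ∂ν :=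
    integral_integral_swap hintprod
  have h2 : ∫ s, (∫ x, G (S s x) ∂μ) ∂ν = 0 := by
    rw [← hswap, ← h1]
    exact integral_congr_ae (Filter.Eventually.of_forall fun x => (hform x).symm)
  have h3 : ∀ᵐ s ∂ν, (∫ x, G (S s x) ∂μ) = ∫ x, G x ∂μ := by
    filter_upwards [ae_restrict_mem measurableSet_Ioc] with s hs
    exact hint_inv G hGmeas s hs.1.le
  have h4 : ∫ s, (∫ x, G (S s x) ∂μ) ∂ν = ∫ x, G x ∂μ := by
    rw [integral_congr_ae h3, integral_const]
    simp [hνdef]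
  rw [← h4, h2]
end

section
/- (Sion's minimax theorem, affine case) Let U be a compact convex subset of a topological vector space and Z a convex subset of a topological vector space. Let f : U × Z → ℝ be jointly continuous, linear (or affine) in the first variable for each fixed second variable, and affine in the second variable for each fixed first variable. Then max_{u∈U} inf_{v∈Z} f(u,v) = inf_{v∈Z} max_{u∈U} f(u,v). -/
/-- An affine function on a convex set respects finite convex combinations. -/
lemma affine_finsum {G : Type*} [AddCommGroup G] [Module ℝ G] {Z : Set G}
    (hZ : Convex ℝ Z) (g : G → ℝ)
    (hg : ∀ v₁ ∈ Z, ∀ v₂ ∈ Z, ∀ θ : ℝ, 0 ≤ θ → θ ≤ 1 →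
      g (θ • v₁ + (1 - θ) • v₂) = θ * g v₁ + (1 - θ) * g v₂)
    {ι : Type*} (s : Finset ι) (w : ι → ℝ) (p : ι → G)
    (h0 : ∀ i ∈ s, 0 ≤ w i) (h1 : (∑ i ∈ s, w i) = 1) (hp : ∀ i ∈ s, p i ∈ Z) :
    g (∑ i ∈ s, w i • p i) = ∑ i ∈ s, w i * g (p i) := by
  classical
  induction s using Finset.induction generalizing w with
  | empty => simp at h1
  | @insert a s ha ih =>
    rw [Finset.sum_insert ha] at h1 ⊢
    rw [Finset.sum_insert ha]
    have h0' : ∀ i ∈ s, 0 ≤ w i := fun i hi => h0 i (Finset.mem_insert_of_mem hi)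
    have hp' : ∀ i ∈ s, p i ∈ Z := fun i hi => hp i (Finset.mem_insert_of_mem hi)
    have hwa : 0 ≤ w a := h0 a (Finset.mem_insert_self a s)
    have hts : 0 ≤ ∑ i ∈ s, w i := Finset.sum_nonneg h0'
    by_cases hT : (∑ i ∈ s, w i) = 0
    · have hz : ∀ i ∈ s, w i = 0 := (Finset.sum_eq_zero_iff_of_nonneg h0').1 hT
      have hwa1 : w a = 1 := by rw [hT] at h1; linarith
      have e1 : (∑ i ∈ s, w i • p i) = 0 := Finset.sum_eq_zero fun i hi => by
        rw [hz i hi, zero_smul]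
      have e2 : (∑ i ∈ s, w i * g (p i)) = 0 := Finset.sum_eq_zero fun i hi => by
        rw [hz i hi, zero_mul]
      rw [e1, e2, hwa1, one_smul, add_zero, one_mul, add_zero]
    · set t : ℝ := ∑ i ∈ s, w i with htdef
      have htpos : 0 < t := lt_of_le_of_ne hts (Ne.symm hT)
      have hta : t = 1 - w a := by linarith
      have hwa1 : w a ≤ 1 := by linarith
      have hd0 : ∀ i ∈ s, 0 ≤ w i / t := fun i hi => div_nonneg (h0' i hi) (le_of_lt htpos)
      have hd1 : (∑ i ∈ s, w i / t) = 1 := by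
        rw [← Finset.sum_div, ← htdef, div_self hT]
      have hq : (∑ i ∈ s, (w i / t) • p i) ∈ Z := hZ.sum_mem hd0 hd1 hp'
      have hsq : (∑ i ∈ s, w i • p i) = t • ∑ i ∈ s, (w i / t) • p i := by
        rw [Finset.smul_sum]
        refine Finset.sum_congr rfl fun i hi => ?_
        rw [smul_smul, mul_div_cancel₀ _ hT]
      have hgq : g (∑ i ∈ s, (w i / t) • p i) = ∑ i ∈ s, (w i / t) * g (p i) :=
        ih (fun i => w i / t) hd0 hd1 hp'
      have key := hg (p a) (hp a (Finset.mem_insert_self a s))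
        (∑ i ∈ s, (w i / t) • p i) hq (w a) hwa hwa1
      rw [← hta] at key
      rw [hsq, key, hgq, Finset.mul_sum]
      congr 1
      refine Finset.sum_congr rfl fun i hi => ?_
      field_simp

/-- Key finite lemma: if for every `z ∈ Z` some `u ∈ U` has `c ≤ f u z`, then there is a
single `u ∈ U` working simultaneously for any finite family of points of `Z`. -/
lemma key_finite {E G : Type*}
    [AddCommGroup E] [Module ℝ E] [TopologicalSpace E]
    [AddCommGroup G] [Module ℝ G]
    {U : Set E} (hUcpt : IsCompact U) (hUconv : Convex ℝ U) (hUne : U.Nonempty)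
    {Z : Set G} (hZconv : Convex ℝ Z)
    {f : E → G → ℝ}
    (hcont : ∀ z ∈ Z, ContinuousOn (fun u => f u z) U)
    (haff₁ : ∀ v ∈ Z, ∀ u₁ ∈ U, ∀ u₂ ∈ U, ∀ θ : ℝ, 0 ≤ θ → θ ≤ 1 →
      f (θ • u₁ + (1 - θ) • u₂) v = θ * f u₁ v + (1 - θ) * f u₂ v)
    (haff₂ : ∀ u ∈ U, ∀ v₁ ∈ Z, ∀ v₂ ∈ Z, ∀ θ : ℝ, 0 ≤ θ → θ ≤ 1 →
      f u (θ • v₁ + (1 - θ) • v₂) = θ * f u v₁ + (1 - θ) * f u v₂)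
    {ι : Type*} [Fintype ι] (v : ι → G) (hv : ∀ i, v i ∈ Z) (c : ℝ)
    (hc : ∀ z ∈ Z, ∃ u ∈ U, c ≤ f u z) :
    ∃ u ∈ U, ∀ i, c ≤ f u (v i) := by
  classical
  by_contra hcon
  push_neg at hcon
  set T : E → ι → ℝ := fun u i => f u (v i) with hT
  have hTcont : ContinuousOn T U := continuousOn_pi.2 fun i => hcont _ (hv i)
  set S := T '' U with hS
  have hScpt : IsCompact S := hUcpt.image_of_continuousOn hTcont
  have hSconv : Convex ℝ S := by
    rintro x ⟨u₁, hu₁, rfl⟩ y ⟨u₂, hu₂, rfl⟩ α β hα hβ hab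
    refine ⟨α • u₁ + β • u₂, hUconv hu₁ hu₂ hα hβ hab, ?_⟩
    funext i
    have hβ' : β = 1 - α := by linarith
    subst hβ'
    simp only [hT, Pi.add_apply, Pi.smul_apply, smul_eq_mul]
    exact haff₁ (v i) (hv i) u₁ hu₁ u₂ hu₂ α hα (by linarith)
  set Q : Set (ι → ℝ) := {x | ∀ i, c ≤ x i} with hQ
  have hQconv : Convex ℝ Q := by
    intro x hx y hy α β hα hβ hab
    have hx' : ∀ i, c ≤ x i := hx
    have hy' : ∀ i, c ≤ y i := hy
    intro i
    simp only [Pi.add_apply, Pi.smul_apply, smul_eq_mul]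
    have h1 : α * c ≤ α * x i := mul_le_mul_of_nonneg_left (hx' i) hα
    have h2 : β * c ≤ β * y i := mul_le_mul_of_nonneg_left (hy' i) hβ
    have h3 : α * c + β * c = c := by rw [← add_mul, hab, one_mul]
    linarith
  have hQcl : IsClosed Q := by
    have : Q = ⋂ i, {x : ι → ℝ | c ≤ x i} := by
      ext x; simp [hQ, Set.mem_iInter]
    rw [this]
    exact isClosed_iInter fun i => isClosed_le continuous_const (continuous_apply i)
  have hdisj : Disjoint S Q := by
    rw [Set.disjoint_left]
    rintro x ⟨u, hu, rfl⟩ hxQ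
    obtain ⟨i, hi⟩ := hcon u hu
    exact absurd (hxQ i) (not_le.2 hi)
  obtain ⟨φ, a, b, hφS, hab, hφQ⟩ :=
    geometric_hahn_banach_compact_closed hSconv hScpt hQconv hQcl hdisj
  set lam : ι → ℝ := fun i => φ (fun j => if i = j then 1 else 0) with hlam
  have hconst : ∀ x : ι → ℝ, φ x = ∑ i, x i * lam i := by
    intro x
    have := (φ : (ι → ℝ) →ₗ[ℝ] ℝ).pi_apply_eq_sum_univ x
    simpa [hlam, smul_eq_mul] using this
  have hc1Q : (fun _ : ι => c) ∈ Q := fun i => le_rfl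
  have hc1 : b < φ (fun _ : ι => c) := hφQ _ hc1Q
  have hlam_nonneg : ∀ i, 0 ≤ lam i := by
    intro i
    by_contra h
    push_neg at h
    set t : ℝ := (b - φ fun _ : ι => c) / lam i with htdef
    have ht : 0 ≤ t := le_of_lt (div_pos_of_neg_of_neg (by linarith) h)
    have hmem : ((fun _ : ι => c) + t • (fun j => if i = j then (1 : ℝ) else 0)) ∈ Q := by
      intro j
      simp only [Pi.add_apply, Pi.smul_apply, smul_eq_mul]
      by_cases hij : i = j
      · simp only [hij, if_pos rfl]
        simp only [if_pos]
        nlinarith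
      · simp [hij]
    have h2 := hφQ _ hmem
    rw [map_add, map_smul, smul_eq_mul] at h2
    have hli : φ (fun j => if i = j then (1 : ℝ) else 0) = lam i := rfl
    rw [hli, htdef, div_mul_cancel₀ _ (ne_of_lt h)] at h2
    linarith
  set Tot : ℝ := ∑ i, lam i with hTot
  have hTot0 : 0 ≤ Tot := Finset.sum_nonneg fun i _ => hlam_nonneg i
  have hTotpos : 0 < Tot := by
    rcases lt_or_eq_of_le hTot0 with h | h
    · exact h
    · exfalso
      have hz : ∀ i ∈ Finset.univ, lam i = 0 :=
        (Finset.sum_eq_zero_iff_of_nonneg fun i _ => hlam_nonneg i).1 h.symm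
      have hφ0 : ∀ x : ι → ℝ, φ x = 0 := fun x => by
        rw [hconst]
        exact Finset.sum_eq_zero fun i hi => by rw [hz i hi, mul_zero]
      obtain ⟨u₀, hu₀⟩ := hUne
      have h1 := hφS (T u₀) ⟨u₀, hu₀, rfl⟩
      rw [hφ0] at h1
      rw [hφ0] at hc1
      linarith
  set w : ι → ℝ := fun i => lam i / Tot with hw
  have hw0 : ∀ i ∈ Finset.univ, 0 ≤ w i :=
    fun i _ => div_nonneg (hlam_nonneg i) hTot0
  have hwsum : (∑ i, w i) = 1 := by
    rw [hw]; rw [← Finset.sum_div, ← hTot, div_self (ne_of_gt hTotpos)]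
  set vstar : G := ∑ i, w i • v i with hvstar
  have hvZ : vstar ∈ Z := hZconv.sum_mem hw0 hwsum fun i _ => hv i
  obtain ⟨u, hu, hcu⟩ := hc vstar hvZ
  have hfu : f u vstar = φ (T u) / Tot := by
    have h1 : f u vstar = ∑ i, w i * f u (v i) :=
      affine_finsum hZconv (f u) (haff₂ u hu) Finset.univ w v hw0 hwsum fun i _ => hv i
    rw [h1, hconst (T u), Finset.sum_div]
    refine Finset.sum_congr rfl fun i _ => ?_
    simp only [hw, hT]
    ring
  have h2 : φ (T u) < a := hφS _ ⟨u, hu, rfl⟩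
  have h4 : φ (fun _ : ι => c) = c * Tot := by
    rw [hconst, hTot, Finset.mul_sum]
  have h5 : φ (T u) < c * Tot := by rw [← h4]; linarith
  have h6 : f u vstar < c := by
    rw [hfu, div_lt_iff₀ hTotpos]
    linarith
  linarith

/-- Sion's minimax theorem (affine case): for a compact convex `U` in a topological
vector space, a convex `Z` in a (possibly different) topological vector space, and a
jointly continuous `f` which is affine in each variable separately,
`max_{u∈U} inf_{v∈Z} f(u,v) = inf_{v∈Z} max_{u∈U} f(u,v)` (and the outer max on the
left-hand side is attained). -/
theorem stmt14 {E G : Type*}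
    [AddCommGroup E] [Module ℝ E] [TopologicalSpace E]
    [AddCommGroup G] [Module ℝ G] [TopologicalSpace G]
    (U : Set E) (hUcpt : IsCompact U) (hUconv : Convex ℝ U) (hUne : U.Nonempty)
    (Z : Set G) (hZconv : Convex ℝ Z) (hZne : Z.Nonempty)
    (f : E → G → ℝ)
    (hcont : ContinuousOn (fun p : E × G => f p.1 p.2) (U ×ˢ Z))
    (haff₁ : ∀ v ∈ Z, ∀ u₁ ∈ U, ∀ u₂ ∈ U, ∀ θ : ℝ, 0 ≤ θ → θ ≤ 1 →
      f (θ • u₁ + (1 - θ) • u₂) v = θ * f u₁ v + (1 - θ) * f u₂ v)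
    (haff₂ : ∀ u ∈ U, ∀ v₁ ∈ Z, ∀ v₂ ∈ Z, ∀ θ : ℝ, 0 ≤ θ → θ ≤ 1 →
      f u (θ • v₁ + (1 - θ) • v₂) = θ * f u v₁ + (1 - θ) * f u v₂) :
    (∃ u₀ ∈ U, (⨅ v : Z, (f u₀ v : EReal)) = ⨆ u : U, ⨅ v : Z, (f u v : EReal)) ∧
    (⨆ u : U, ⨅ v : Z, (f u v : EReal)) = ⨅ v : Z, ⨆ u : U, (f u v : EReal) := by
  classical
  have hcont' : ∀ z ∈ Z, ContinuousOn (fun u => f u z) U := by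
    intro z hz
    exact hcont.comp (Continuous.continuousOn (continuous_id.prodMk continuous_const))
      fun u hu => ⟨hu, hz⟩
  set cstar : EReal := ⨅ v : Z, ⨆ u : U, (f u v : EReal) with hcstar
  have haveumax : ∃ u₀ ∈ U, ∀ z ∈ Z, cstar ≤ (f u₀ z : EReal) := by
    have hUne' : Nonempty ↥U := hUne.to_subtype
    haveI : CompactSpace ↥U := isCompact_iff_compactSpace.mp hUcpt
    set ι := {p : G × ℝ // p.1 ∈ Z ∧ (p.2 : EReal) < cstar} with hι
    set C : ι → Set ↥U := fun p => {x | p.val.2 ≤ f x.val p.val.1} with hC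
    have hCcl : ∀ p, IsClosed (C p) := by
      intro p
      have hco : Continuous fun x : ↥U => f x.val p.val.1 :=
        (hcont' _ p.2.1).comp_continuous continuous_subtype_val fun x => x.2
      exact isClosed_le continuous_const hco
    have hFIP : ∀ s : Finset ι, ((Set.univ : Set ↥U) ∩ ⋂ p ∈ s, C p).Nonempty := by
      intro s
      rcases s.eq_empty_or_nonempty with rfl | hs
      · simpa using Set.univ_nonempty
      · set c : ℝ := s.sup' hs (fun p => p.val.2) with hcdef
        have hclt : (c : EReal) < cstar := by
          obtain ⟨p, hp, hpe⟩ := s.exists_mem_eq_sup' hs (fun p => p.val.2)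
          rw [hcdef, hpe]
          exact p.2.2
        have hcz : ∀ z ∈ Z, ∃ u ∈ U, c ≤ f u z := by
          intro z hz
          have h1 : cstar ≤ ⨆ u : U, (f u z : EReal) := iInf_le (fun v : Z => ⨆ u : U, (f u v : EReal)) ⟨z, hz⟩
          have h2 : (c : EReal) < ⨆ u : U, (f u z : EReal) := lt_of_lt_of_le hclt h1
          obtain ⟨u, hu⟩ := lt_iSup_iff.mp h2
          exact ⟨u, u.2, le_of_lt (by exact_mod_cast hu)⟩
        obtain ⟨u, hu, hall⟩ := key_finite hUcpt hUconv hUne hZconv hcont' haff₁ haff₂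
          (fun p : {p : ι // p ∈ s} => p.val.val.1) (fun p => p.val.2.1) c hcz
        refine ⟨⟨u, hu⟩, Set.mem_inter (Set.mem_univ _) ?_⟩
        simp only [Set.mem_iInter]
        intro p hp
        have h1 := hall ⟨p, hp⟩
        have h2 : p.val.2 ≤ c := by
          rw [hcdef]
          exact Finset.le_sup' (fun q : ι => q.val.2) hp
        exact le_trans h2 h1
    obtain ⟨x, -, hx⟩ := isCompact_univ.inter_iInter_nonempty C hCcl hFIP
    refine ⟨x.val, x.2, fun z hz => ?_⟩
    by_contra hlt
    push_neg at hlt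
    obtain ⟨c, hc1, hc2⟩ := EReal.exists_between_coe_real hlt
    have hmem := Set.mem_iInter.mp hx ⟨(z, c), hz, hc2⟩
    have : (c : EReal) ≤ (f x.val z : EReal) := by exact_mod_cast hmem
    exact absurd this (not_le.2 hc1)
  obtain ⟨u₀, hu₀, hu₀all⟩ := haveumax
  have hle1 : (⨆ u : U, ⨅ v : Z, (f u v : EReal)) ≤ cstar :=
    iSup_iInf_le_iInf_iSup fun (u : U) (v : Z) => (f u v : EReal)
  have hge : cstar ≤ ⨅ v : Z, (f u₀ v : EReal) := le_iInf fun v => hu₀all v v.2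
  have hle2 : (⨅ v : Z, (f u₀ v : EReal)) ≤ ⨆ u : U, ⨅ v : Z, (f u v : EReal) :=
    le_iSup (fun u : U => ⨅ v : Z, (f (u : E) v : EReal)) ⟨u₀, hu₀⟩
  exact ⟨⟨u₀, hu₀, le_antisymm hle2 (hle1.trans hge)⟩,
    le_antisymm hle1 (hge.trans hle2)⟩
end
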